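/- arXiv:1307.0120 — 4 statements merged into one kernel-verified Lean document; each statement's English description precedes it below -/
import Mathlib

section
/- Let X be a compact metric space and let f : X → X be a continuous map with the almost specification property with mistake function g and function k_g. Given a sequence of positive real numbers {ε_i}_{i≥1}, a sequence of points {x_i}_{i≥1} in X, and a sequence of integers {n_i}_{i≥0} with n_0 = 0 and n_i ≥ k_g(ε_i) for all i ≥ 1, set l_i = n_0 + n_1 + ⋯ + n_{i−1} for i ≥ 1. Then there exists a point z ∈ X such that for every j ≥ 1, f^{l_j}(z) lies in the closure of B_{n_j}(g; x_j, ε_j). -/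
open Filter Metric Set MeasureTheory Topology

section Defs

variable {X : Type*} [MetricSpace X]

/-- The Bowen ball of radius `ε` centered at `x` along a finite set of times `Λ`. -/
def bowenBallAlong (f : X → X) (Λ : Finset ℕ) (x : X) (ε : ℝ) : Set X :=
  {y | ∀ j ∈ Λ, dist (f^[j] x) (f^[j] y) < ε}

/-- `g` is a mistake function with threshold `ε₀`. -/
structure IsMistakeFun (g : ℕ → ℝ → ℕ) (ε₀ : ℝ) : Prop where
  pos : 0 < ε₀
  mono : ∀ n : ℕ, ∀ ε : ℝ, 0 < ε → ε ≤ ε₀ → g n ε ≤ g (n + 1) ε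
  small : ∀ ε : ℝ, 0 < ε → ε ≤ ε₀ →
    Tendsto (fun n : ℕ => (g n ε : ℝ) / n) atTop (nhds 0)
  ext : ∀ n : ℕ, ∀ ε : ℝ, ε₀ < ε → g n ε = g n ε₀

/-- The `(g;n,ε)`-Bowen ball `B_n(g;x,ε)`: union of Bowen balls along all
`Λ ⊆ {0,…,n-1}` with `#Λ ≥ n - g(n,ε)`. -/
def mistakeBowenBall (f : X → X) (g : ℕ → ℝ → ℕ) (n : ℕ) (x : X) (ε : ℝ) : Set X :=
  ⋃ Λ ∈ {Λ : Finset ℕ | Λ ⊆ Finset.range n ∧ n - g n ε ≤ Λ.card},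
    bowenBallAlong f Λ x ε

/-- Almost specification property with given mistake function `g` and gap function `kg`. -/
def AlmostSpecWith (f : X → X) (g : ℕ → ℝ → ℕ) (kg : ℝ → ℕ) : Prop :=
  ∀ m : ℕ, 1 ≤ m → ∀ (ε : ℕ → ℝ) (x : ℕ → X) (nseq : ℕ → ℕ),
    (∀ j, 1 ≤ j → j ≤ m → 0 < ε j) →
    (∀ j, 1 ≤ j → j ≤ m → kg (ε j) ≤ nseq j) →
    ∃ z : X, ∀ j, 1 ≤ j → j ≤ m →
      f^[∑ s ∈ Finset.Ico 1 j, nseq s] z ∈ mistakeBowenBall f g (nseq j) (x j) (ε j)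

/-- The almost specification property. -/
def AlmostSpec (f : X → X) : Prop :=
  ∃ (g : ℕ → ℝ → ℕ) (ε₀ : ℝ) (kg : ℝ → ℕ),
    IsMistakeFun g ε₀ ∧ AlmostSpecWith f g kg

/-- `{x_n}` is a `δ`-average-pseudo-orbit of `f`. -/
def AvgPseudoOrbit (f : X → X) (δ : ℝ) (x : ℕ → X) : Prop :=
  ∃ N : ℕ, 0 < N ∧ ∀ n : ℕ, N ≤ n → ∀ k : ℕ,
    (∑ i ∈ Finset.range n, dist (f (x (i + k))) (x (i + k + 1))) / n < δ

/-- `{x_n}` is `ε`-shadowed in average by `y`. -/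
def ShadowedInAvg (f : X → X) (ε : ℝ) (x : ℕ → X) (y : X) : Prop :=
  limsup (fun n : ℕ => (∑ i ∈ Finset.range n, dist (f^[i] y) (x i)) / n) atTop < ε

/-- The average shadowing property. -/
def AvgShadowing (f : X → X) : Prop :=
  ∀ ε : ℝ, 0 < ε → ∃ δ : ℝ, 0 < δ ∧
    ∀ x : ℕ → X, AvgPseudoOrbit f δ x → ∃ y : X, ShadowedInAvg f ε x y

/-- `{x_n}` is an asymptotic average pseudo-orbit of `f`. -/
def AsympAvgPseudoOrbit (f : X → X) (x : ℕ → X) : Prop :=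
  Tendsto (fun n : ℕ => (∑ i ∈ Finset.range n, dist (f (x i)) (x (i + 1))) / n)
    atTop (nhds 0)

/-- `{x_n}` is asymptotically shadowed in average by `y`. -/
def AsympShadowedInAvg (f : X → X) (x : ℕ → X) (y : X) : Prop :=
  Tendsto (fun n : ℕ => (∑ i ∈ Finset.range n, dist (f^[i] y) (x i)) / n)
    atTop (nhds 0)

/-- The asymptotic average shadowing property. -/
def AsympAvgShadowing (f : X → X) : Prop :=
  ∀ x : ℕ → X, AsympAvgPseudoOrbit f x → ∃ y : X, AsympShadowedInAvg f x y

/-- An infinite `δ`-pseudo-orbit. -/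
def PseudoOrbit (f : X → X) (δ : ℝ) (x : ℕ → X) : Prop :=
  ∀ i : ℕ, dist (f (x i)) (x (i + 1)) < δ

/-- There exists a finite `δ`-pseudo-orbit of length `n` from `x` to `y`. -/
def FinChain (f : X → X) (δ : ℝ) (n : ℕ) (x y : X) : Prop :=
  ∃ c : ℕ → X, c 0 = x ∧ c n = y ∧ ∀ i < n, dist (f (c i)) (c (i + 1)) < δ

/-- Chain transitivity. -/
def ChainTransitive (f : X → X) : Prop :=
  ∀ δ : ℝ, 0 < δ → ∀ x y : X, ∃ n : ℕ, 0 < n ∧ FinChain f δ n x y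

/-- Chain mixing. -/
def ChainMixing (f : X → X) : Prop :=
  ∀ δ : ℝ, 0 < δ → ∀ x y : X, ∃ N : ℕ, 0 < N ∧ ∀ n : ℕ, N ≤ n → FinChain f δ n x y

/-- The shadowing property. -/
def Shadowing (f : X → X) : Prop :=
  ∀ ε : ℝ, 0 < ε → ∃ δ : ℝ, 0 < δ ∧
    ∀ x : ℕ → X, PseudoOrbit f δ x → ∃ z : X, ∀ i : ℕ, dist (f^[i] z) (x i) < ε

/-- The limit shadowing property. -/
def LimitShadowing (f : X → X) : Prop :=
  ∀ x : ℕ → X, Tendsto (fun i : ℕ => dist (f (x i)) (x (i + 1))) atTop (nhds 0) →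
    ∃ z : X, Tendsto (fun i : ℕ => dist (f^[i] z) (x i)) atTop (nhds 0)

/-- Topological transitivity. -/
def TopTransitive {Y : Type*} [TopologicalSpace Y] (f : Y → Y) : Prop :=
  ∀ U V : Set Y, IsOpen U → IsOpen V → U.Nonempty → V.Nonempty →
    ∃ n : ℕ, 0 < n ∧ (f^[n] '' U ∩ V).Nonempty

/-- Total transitivity. -/
def TotallyTransitive {Y : Type*} [TopologicalSpace Y] (f : Y → Y) : Prop :=
  ∀ n : ℕ, 1 ≤ n → TopTransitive f^[n]

/-- Topological weak mixing: `f × f` is transitive. -/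
def WeaklyMixing {Y : Type*} [TopologicalSpace Y] (f : Y → Y) : Prop :=
  TopTransitive (Prod.map f f)

/-- Topological mixing. -/
def TopMixing {Y : Type*} [TopologicalSpace Y] (f : Y → Y) : Prop :=
  ∀ U V : Set Y, IsOpen U → IsOpen V → U.Nonempty → V.Nonempty →
    ∃ N : ℕ, 0 < N ∧ ∀ n : ℕ, N ≤ n → (f^[n] '' U ∩ V).Nonempty

/-- The forward orbit of a point. -/
def fOrbit (f : X → X) (x : X) : Set X := Set.range fun n : ℕ => f^[n] x

/-- `x` is a minimal point of `f`: every point of the orbit closure of `x`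
has orbit dense in that orbit closure. -/
def MinimalPoint (f : X → X) (x : X) : Prop :=
  ∀ y ∈ closure (fOrbit f x), closure (fOrbit f x) ⊆ closure (fOrbit f y)

variable [MeasurableSpace X]

/-- `μ` is an `f`-invariant Borel probability measure. -/
def InvariantProb (f : X → X) (μ : Measure X) : Prop :=
  IsProbabilityMeasure μ ∧ ∀ B : Set X, MeasurableSet B → μ (f ⁻¹' B) = μ B

/-- A set is universally null if it has measure zero for every invariant
probability measure. -/
def UnivNull (f : X → X) (U : Set X) : Prop :=
  ∀ μ : Measure X, InvariantProb f μ → μ U = 0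

/-- The measure center: complement of the union of all universally null open sets. -/
def measureCenter (f : X → X) : Set X :=
  (⋃ U ∈ {U : Set X | IsOpen U ∧ UnivNull f U}, U)ᶜ

/-- `μ` has full support. -/
def FullSupport (μ : Measure X) : Prop :=
  ∀ U : Set X, IsOpen U → U.Nonempty → 0 < μ U

end Defs

section Visits

variable {X : Type*} [MetricSpace X]

/-- The set of visiting times `N(x,U)`. -/
def visitTimes (f : X → X) (x : X) (U : Set X) : Set ℕ :=
  {n : ℕ | 0 < n ∧ f^[n] x ∈ U}

/-- `η(n,U) = max_{x ∈ X} #(N(x,U) ∩ {0,…,n-1})`. -/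
noncomputable def eta (f : X → X) (U : Set X) (n : ℕ) : ℕ :=
  sSup {k : ℕ | ∃ x : X, k = (visitTimes f x U ∩ Set.Iio n).ncard}

/-- The visit frequency `ξ(U) = inf_{n>0} η(n,U)/n`. -/
noncomputable def xi (f : X → X) (U : Set X) : ℝ :=
  ⨅ n : ℕ, (eta f U (n + 1) : ℝ) / (n + 1)

/-- `J ⊆ ℕ` has asymptotic density `a`. -/
def HasDensity (J : Set ℕ) (a : ℝ) : Prop :=
  Tendsto (fun n : ℕ => ((J ∩ Set.Iio n).ncard : ℝ) / n) atTop (nhds a)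

/-- Upper asymptotic density of a set of naturals. -/
noncomputable def upperDensity (J : Set ℕ) : ℝ :=
  limsup (fun n : ℕ => ((J ∩ Set.Iio n).ncard : ℝ) / n) atTop

end Visits

/-- Infinite version of the almost specification property, with
tracing in closures of mistake Bowen balls. -/
theorem almostSpec_infinite
    {X : Type*} [MetricSpace X] [CompactSpace X]
    (f : X → X) (hf : Continuous f)
    (g : ℕ → ℝ → ℕ) (ε₀ : ℝ) (kg : ℝ → ℕ)
    (hg : IsMistakeFun g ε₀) (hspec : AlmostSpecWith f g kg)
    (ε : ℕ → ℝ) (hε : ∀ i : ℕ, 1 ≤ i → 0 < ε i)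
    (x : ℕ → X) (nseq : ℕ → ℕ) (h0 : nseq 0 = 0)
    (hn : ∀ i : ℕ, 1 ≤ i → kg (ε i) ≤ nseq i) :
    ∃ z : X, ∀ j : ℕ, 1 ≤ j →
      f^[∑ s ∈ Finset.range j, nseq s] z ∈
        closure (mistakeBowenBall f g (nseq j) (x j) (ε j)) := by
  have hsum : ∀ j : ℕ, ∑ s ∈ Finset.range j, nseq s = ∑ s ∈ Finset.Ico 1 j, nseq s := by
    intro j
    rcases Nat.eq_zero_or_pos j with hj | hj
    · simp [hj]
    · rw [Finset.range_eq_Ico,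
        ← Finset.sum_Ico_consecutive nseq (Nat.zero_le 1) hj]
      simp [h0]
  have key : ∀ m : ℕ, ∃ z : X, ∀ j, 1 ≤ j → j ≤ m + 1 →
      f^[∑ s ∈ Finset.range j, nseq s] z ∈ mistakeBowenBall f g (nseq j) (x j) (ε j) := by
    intro m
    obtain ⟨z, hz⟩ := hspec (m + 1) (by omega) ε x nseq
      (fun j h1 _ => hε j h1) (fun j h1 _ => hn j h1)
    exact ⟨z, fun j h1 h2 => by rw [hsum j]; exact hz j h1 h2⟩
  choose zs hzs using key
  obtain ⟨z, -, φ, hφ, hlim⟩ := IsCompact.tendsto_subseq (isCompact_univ)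
    (fun m => Set.mem_univ (zs m))
  refine ⟨z, fun j hj => ?_⟩
  refine mem_closure_of_tendsto
    (((hf.iterate (∑ s ∈ Finset.range j, nseq s)).tendsto z).comp hlim) ?_
  filter_upwards [Filter.eventually_ge_atTop j] with k hk
  exact hzs (φ k) j hj (by have : k ≤ φ k := hφ.le_apply; omega)
end

section
/- Let (X,f) be a dynamical system with X a compact metric space and f : X → X continuous with the average shadowing property. Let p, q ∈ X and let A, B ⊆ ℕ be sets with positive upper asymptotic density. Then for every ε > 0 there exist a point z ∈ X and integers a_0 < b_0 < a_1 < b_1 < ⋯ such that for every i ∈ ℕ: a_i ∈ A, b_i ∈ B, d(f^{a_i}(z), f^{a_i}(p)) < ε, and d(f^{b_i}(z), f^{b_i}(q)) < ε. -/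
open Filter Metric Set MeasureTheory Topology

section AuxLemmas

open Finset in
private lemma aux_ncard_inter_Iio (C : Set ℕ) [DecidablePred (· ∈ C)] (N : ℕ) :
    ((C ∩ Set.Iio N).ncard : ℝ) = (((Finset.range N).filter (· ∈ C)).card : ℝ) := by
  congr 1
  rw [show C ∩ Set.Iio N = (((Finset.range N).filter (· ∈ C) : Finset ℕ) : Set ℕ) by
    ext a
    simp only [Set.mem_inter_iff, Set.mem_Iio, Finset.coe_filter, Finset.mem_range,
      Set.mem_setOf_eq]
    tauto]
  exact Set.ncard_coe_finset _

private lemma aux_card_filter_le_of_gaps (Q : ℕ → Prop) [DecidablePred Q] (L N : ℕ)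
    (hL : 0 < L) (hgap : ∀ i j, Q i → Q j → i < j → i + L ≤ j) :
    ((Finset.range N).filter Q).card ≤ (N - 1) / L + 1 := by
  have key : ∀ i j, i ∈ (Finset.range N).filter Q → j ∈ (Finset.range N).filter Q →
      i < j → i / L < j / L := by
    intro i j hi hj hij
    simp only [Finset.mem_filter, Finset.mem_range] at hi hj
    have h1 : i + L ≤ j := hgap i j hi.2 hj.2 hij
    have h2 : (i + L) / L ≤ j / L := Nat.div_le_div_right h1
    rw [Nat.add_div_right i hL] at h2
    omega
  have : ((Finset.range N).filter Q).card ≤ (Finset.range ((N - 1) / L + 1)).card := by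
    apply Finset.card_le_card_of_injOn (fun i => i / L)
    · intro i hi
      simp only [Finset.mem_coe, Finset.mem_filter, Finset.mem_range] at hi
      simp only [Finset.mem_coe, Finset.mem_range]
      have : i ≤ N - 1 := by omega
      exact Nat.lt_succ_of_le (Nat.div_le_div_right this)
    · intro i hi j hj hij
      by_contra hne
      rcases Nat.lt_or_ge i j with hlt | hge
      · exact absurd hij (Nat.ne_of_lt (key i j hi hj hlt))
      · have hlt : j < i := lt_of_le_of_ne hge (Ne.symm hne)
        exact absurd hij.symm (Nat.ne_of_lt (key j i hj hi hlt))
  simpa using this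

private lemma aux_exists_density_time (C : Set ℕ) [DecidablePred (· ∈ C)]
    (hC : 0 < upperDensity C) (m : ℕ) :
    ∃ t : ℕ, m ≤ t ∧
      upperDensity C / 2 * t ≤ (((Finset.range t).filter (· ∈ C)).card : ℝ) := by
  have hrw : upperDensity C =
      limsup (fun N : ℕ => (((Finset.range N).filter (· ∈ C)).card : ℝ) / N) atTop := by
    unfold upperDensity
    congr 1
    funext N
    rw [aux_ncard_inter_Iio]
  have hfreq : ∃ᶠ t in atTop,
      upperDensity C / 2 < (((Finset.range t).filter (· ∈ C)).card : ℝ) / t := by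
    apply frequently_lt_of_lt_limsup
    · exact isCoboundedUnder_le_of_le atTop (x := 0) (fun i => by positivity)
    · rw [← hrw]; linarith
  obtain ⟨t, ht, hlt⟩ := frequently_atTop.mp hfreq (max m 1)
  refine ⟨t, le_trans (le_max_left _ _) ht, ?_⟩
  have ht0 : (0 : ℝ) < t := by
    have : 1 ≤ t := le_trans (le_max_right _ _) ht
    exact_mod_cast this
  exact le_of_lt ((lt_div_iff₀ ht0).mp hlt)

end AuxLemmas

set_option maxHeartbeats 2000000 in
/-- Interleaved approach to the orbits of two points along sets
of positive upper density, for maps with the average shadowing property. -/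
theorem avgShadowing_interleaved_visits
    {X : Type*} [MetricSpace X] [CompactSpace X]
    (f : X → X) (hf : Continuous f) (h : AvgShadowing f)
    (p q : X) (A B : Set ℕ)
    (hA : 0 < upperDensity A) (hB : 0 < upperDensity B) :
    ∀ ε : ℝ, 0 < ε → ∃ (z : X) (a b : ℕ → ℕ),
      (∀ i : ℕ, a i < b i ∧ b i < a (i + 1)) ∧
      ∀ i : ℕ, a i ∈ A ∧ b i ∈ B ∧
        dist (f^[a i] z) (f^[a i] p) < ε ∧
        dist (f^[b i] z) (f^[b i] q) < ε := by
  classical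
  intro ε hε
  -- notation for densities
  have hγ : 0 < min (upperDensity A) (upperDensity B) := lt_min hA hB
  set γ := min (upperDensity A) (upperDensity B) with hγdef
  have hγA : γ ≤ upperDensity A := min_le_left _ _
  have hγB : γ ≤ upperDensity B := min_le_right _ _
  set ε' := ε * γ / 16 with hε'def
  have hε' : 0 < ε' := by positivity
  obtain ⟨δ, hδ, hshadow⟩ := h ε' hε'
  -- diameter bound
  set D := Metric.diam (Set.univ : Set X) with hDdef
  have hD : ∀ u v : X, dist u v ≤ D := fun u v =>
    Metric.dist_le_diam_of_mem isCompact_univ.isBounded (Set.mem_univ u) (Set.mem_univ v)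
  have hD0 : 0 ≤ D := Metric.diam_nonneg
  -- gap length L
  obtain ⟨L, hL, hLD⟩ : ∃ L : ℕ, 0 < L ∧ 2 * D / δ < (L : ℝ) := by
    refine ⟨⌈2 * D / δ⌉₊ + 1, Nat.succ_pos _, ?_⟩
    have h1 := Nat.le_ceil (2 * D / δ)
    push_cast
    linarith
  have hDL2 : D < δ / 2 * L := by
    have h1 : 2 * D / δ * δ < (L : ℝ) * δ := by
      apply mul_lt_mul_of_pos_right hLD hδ
    rw [div_mul_cancel₀] at h1
    · nlinarith
    · exact ne_of_gt hδ
  -- counting functions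
  set cA : ℕ → ℕ := fun t => ((Finset.range t).filter (· ∈ A)).card with hcAdef
  set cB : ℕ → ℕ := fun t => ((Finset.range t).filter (· ∈ B)).card with hcBdef
  -- good time selection
  have hgood : ∀ (j m : ℕ), ∃ t, m ≤ t ∧
      (if Even j then upperDensity A / 2 * t ≤ (cA t : ℝ)
        else upperDensity B / 2 * t ≤ (cB t : ℝ)) := by
    intro j m
    by_cases hj : Even j
    · obtain ⟨t, ht, hcard⟩ := aux_exists_density_time A hA m
      exact ⟨t, ht, by rw [if_pos hj]; exact hcard⟩
    · obtain ⟨t, ht, hcard⟩ := aux_exists_density_time B hB m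
      exact ⟨t, ht, by rw [if_neg hj]; exact hcard⟩
  obtain ⟨T, hT⟩ : ∃ T : ℕ → ℕ → ℕ, ∀ j m, m ≤ T j m ∧
      (if Even j then upperDensity A / 2 * (T j m) ≤ (cA (T j m) : ℝ)
        else upperDensity B / 2 * (T j m) ≤ (cB (T j m) : ℝ)) :=
    ⟨fun j m => (hgood j m).choose, fun j m => (hgood j m).choose_spec⟩
  -- the switch sequence
  obtain ⟨n, hn0, hn1, hn2, hn3⟩ : ∃ n : ℕ → ℕ, n 0 = 0 ∧
      (∀ j, n j + L ≤ n (j + 1)) ∧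
      (∀ j, 8 * ((n j : ℕ) : ℝ) / γ < n (j + 1)) ∧
      (∀ j, if Even j then upperDensity A / 2 * (n (j + 1)) ≤ (cA (n (j + 1)) : ℝ)
        else upperDensity B / 2 * (n (j + 1)) ≤ (cB (n (j + 1)) : ℝ)) := by
    refine ⟨fun j => Nat.rec 0
      (fun j' ih => T j' (max (ih + L) (⌈8 * ((ih : ℕ) : ℝ) / γ⌉₊ + 1))) j,
      rfl, fun j => ?_, fun j => ?_, fun j => (hT j _).2⟩
    · exact le_trans (le_max_left _ _) (hT j _).1
    · have h1 : (⌈8 * ((Nat.rec 0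
          (fun j' ih => T j' (max (ih + L) (⌈8 * ((ih : ℕ) : ℝ) / γ⌉₊ + 1))) j : ℕ) : ℝ) / γ⌉₊ + 1 : ℕ) ≤
          T j (max ((Nat.rec 0
          (fun j' ih => T j' (max (ih + L) (⌈8 * ((ih : ℕ) : ℝ) / γ⌉₊ + 1))) j) + L)
          (⌈8 * ((Nat.rec 0
          (fun j' ih => T j' (max (ih + L) (⌈8 * ((ih : ℕ) : ℝ) / γ⌉₊ + 1))) j : ℕ) : ℝ) / γ⌉₊ + 1)) :=
        le_trans (le_max_right _ _) (hT j _).1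
      set v := (Nat.rec 0
          (fun j' ih => T j' (max (ih + L) (⌈8 * ((ih : ℕ) : ℝ) / γ⌉₊ + 1))) j : ℕ)
      have h2 : 8 * (v : ℝ) / γ ≤ (⌈8 * (v : ℝ) / γ⌉₊ : ℝ) := Nat.le_ceil _
      have h3 : ((⌈8 * (v : ℝ) / γ⌉₊ + 1 : ℕ) : ℝ) ≤ _ := Nat.cast_le.mpr h1
      rw [Nat.cast_add, Nat.cast_one] at h3
      linarith
  have hmono : StrictMono n := strictMono_nat_of_lt_succ fun j =>
    lt_of_lt_of_le (by omega) (hn1 j)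
  have hge : ∀ j, j ≤ n j := fun j => hmono.le_apply
  have hgaps : ∀ i j, i < j → n i + L ≤ n j := by
    intro i j hij
    calc n i + L ≤ n (i + 1) := hn1 i
    _ ≤ n j := hmono.monotone hij
  -- block index
  obtain ⟨idx, hidx1, hidx2, hidxle, hidxmono⟩ : ∃ idx : ℕ → ℕ, (∀ a, n (idx a) ≤ a) ∧
      (∀ a, a < n (idx a + 1)) ∧ (∀ a, idx a ≤ a) ∧ (∀ a, idx a ≤ idx (a + 1)) := by
    have hspec : ∀ a, n (Nat.findGreatest (fun j => n j ≤ a) a) ≤ a := fun a =>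
      Nat.findGreatest_spec (P := fun j => n j ≤ a) (m := 0) (Nat.zero_le a)
        (show n 0 ≤ a by rw [hn0]; exact Nat.zero_le a)
    refine ⟨fun a => Nat.findGreatest (fun j => n j ≤ a) a, hspec, fun a => ?_,
      fun a => Nat.findGreatest_le a, fun a => ?_⟩
    · by_contra hcon
      push_neg at hcon
      have h1 : Nat.findGreatest (fun j => n j ≤ a) a + 1 ≤ a :=
        le_trans (hge (Nat.findGreatest (fun j => n j ≤ a) a + 1)) hcon
      have h2 := Nat.le_findGreatest (P := fun j => n j ≤ a) h1 hcon
      omega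
    · exact Nat.le_findGreatest (P := fun j => n j ≤ a + 1)
        (le_trans (Nat.findGreatest_le a) (Nat.le_succ a))
        (le_trans (hspec a) (Nat.le_succ a))
  have hidxuniq : ∀ a j, n j ≤ a → a < n (j + 1) → idx a = j := by
    intro a j h1 h2
    rcases lt_trichotomy (idx a) j with hlt | heq | hgt
    · have h3 : n (idx a + 1) ≤ n j := hmono.monotone (show idx a + 1 ≤ j by omega)
      have h4 := hidx2 a
      omega
    · exact heq
    · have h3 : n (j + 1) ≤ n (idx a) := hmono.monotone (show j + 1 ≤ idx a by omega)
      have h4 := hidx1 a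
      omega
  -- the pseudo-orbit
  obtain ⟨x, hxdef⟩ : ∃ x : ℕ → X, ∀ a, x a = f^[a] (if Even (idx a) then p else q) :=
    ⟨_, fun a => rfl⟩
  have hx_defect : ∀ a : ℕ, (a + 1) ∉ Set.range n → f (x a) = x (a + 1) := by
    intro a ha
    have hle : idx a ≤ idx (a + 1) := hidxmono a
    have heq : idx (a + 1) = idx a := by
      by_contra hne
      have h1 : idx a + 1 ≤ idx (a + 1) := by omega
      have h2 : n (idx a + 1) ≤ n (idx (a + 1)) := hmono.monotone h1
      have h3 := hidx1 (a + 1)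
      have h4 := hidx2 a
      have h5 : n (idx (a + 1)) = a + 1 := by omega
      exact ha ⟨idx (a + 1), h5⟩
    rw [hxdef a, hxdef (a + 1), heq]
    exact (Function.iterate_succ_apply' f a _).symm
  -- gap property of switch times
  have hrange_gap : ∀ s t : ℕ, s ∈ Set.range n → t ∈ Set.range n → s < t → s + L ≤ t := by
    rintro s t ⟨i, rfl⟩ ⟨j, rfl⟩ hst
    exact hgaps i j (hmono.lt_iff_lt.mp hst)
  -- x is a δ-average pseudo-orbit
  have hapo : AvgPseudoOrbit f δ x := by
    refine ⟨L, hL, ?_⟩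
    intro N hN k
    have hN1 : 1 ≤ N := le_trans hL hN
    have hNpos : (0 : ℝ) < N := by exact_mod_cast hN1
    rw [div_lt_iff₀ hNpos]
    set Q : ℕ → Prop := fun i => (i + k + 1) ∈ Set.range n with hQdef
    have hQgap : ∀ i j, Q i → Q j → i < j → i + L ≤ j := by
      intro i j hi hj hij
      have := hrange_gap (i + k + 1) (j + k + 1) hi hj (by omega)
      omega
    have hsum : ∑ i ∈ Finset.range N, dist (f (x (i + k))) (x (i + k + 1)) ≤
        D * (((Finset.range N).filter Q).card : ℝ) := by
      rw [← Finset.sum_filter_add_sum_filter_not (Finset.range N) Q]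
      have h2 : ∑ i ∈ (Finset.range N).filter (fun i => ¬ Q i),
          dist (f (x (i + k))) (x (i + k + 1)) = 0 := by
        apply Finset.sum_eq_zero
        intro i hi
        simp only [Finset.mem_filter] at hi
        rw [hx_defect (i + k) hi.2, dist_self]
      rw [h2, add_zero]
      calc ∑ i ∈ (Finset.range N).filter Q, dist (f (x (i + k))) (x (i + k + 1))
          ≤ ∑ i ∈ (Finset.range N).filter Q, D := Finset.sum_le_sum (fun i _ => hD _ _)
        _ = D * (((Finset.range N).filter Q).card : ℝ) := by
            rw [Finset.sum_const, nsmul_eq_mul, mul_comm]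
    have hcard := aux_card_filter_le_of_gaps Q L N hL hQgap
    have hcard' : (((Finset.range N).filter Q).card : ℝ) ≤ (N : ℝ) / L + 1 := by
      have h1 : ((((N - 1) / L : ℕ) : ℝ)) ≤ ((N - 1 : ℕ) : ℝ) / (L : ℝ) := Nat.cast_div_le
      have h2 : ((N - 1 : ℕ) : ℝ) ≤ (N : ℝ) := by
        have : (N - 1 : ℕ) ≤ N := Nat.sub_le _ _
        exact_mod_cast this
      have h3 : ((N - 1 : ℕ) : ℝ) / (L : ℝ) ≤ (N : ℝ) / L := by gcongr
      calc (((Finset.range N).filter Q).card : ℝ)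
          ≤ (((N - 1) / L + 1 : ℕ) : ℝ) := by exact_mod_cast hcard
        _ ≤ (N : ℝ) / L + 1 := by rw [Nat.cast_add, Nat.cast_one]; linarith
    have hLpos : (0 : ℝ) < L := by exact_mod_cast hL
    have hLN : (L : ℝ) ≤ N := by exact_mod_cast hN
    have hDL' : D / L < δ / 2 := (div_lt_iff₀ hLpos).mpr hDL2
    have e1 : D * ((N : ℝ) / L) < δ / 2 * N := by
      have : D * ((N : ℝ) / L) = D / L * N := by ring
      rw [this]
      exact mul_lt_mul_of_pos_right hDL' hNpos
    have e2 : D < δ / 2 * N := by nlinarith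
    calc ∑ i ∈ Finset.range N, dist (f (x (i + k))) (x (i + k + 1))
        ≤ D * (((Finset.range N).filter Q).card : ℝ) := hsum
      _ ≤ D * ((N : ℝ) / L + 1) := mul_le_mul_of_nonneg_left hcard' hD0
      _ = D * ((N : ℝ) / L) + D := by ring
      _ < δ * N := by linarith
  -- the shadowing point
  obtain ⟨y, hy⟩ := hshadow x hapo
  have hy' : limsup (fun N : ℕ => (∑ i ∈ Finset.range N, dist (f^[i] y) (x i)) / N)
      atTop < ε' := hy
  set S : ℕ → ℝ := fun N => ∑ i ∈ Finset.range N, dist (f^[i] y) (x i) with hSdef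
  have hS0 : ∀ N, 0 ≤ S N := fun N => Finset.sum_nonneg fun i _ => dist_nonneg
  have hSev : ∃ N₁ : ℕ, ∀ N, N₁ ≤ N → 1 ≤ N → S N < ε' * N := by
    have hbdd : IsBoundedUnder (· ≤ ·) atTop (fun N : ℕ => S N / N) := by
      apply Filter.isBoundedUnder_of
      refine ⟨D, fun N => ?_⟩
      rcases Nat.eq_zero_or_pos N with h0 | hpos
      · simp [hSdef, h0, hD0]
      · have hNpos : (0 : ℝ) < N := by exact_mod_cast hpos
        show S N / N ≤ D
        rw [div_le_iff₀ hNpos]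
        calc S N ≤ ∑ i ∈ Finset.range N, D :=
              Finset.sum_le_sum fun i _ => hD _ _
          _ = N * D := by rw [Finset.sum_const, nsmul_eq_mul, Finset.card_range]
          _ ≤ D * N := by ring_nf; exact le_refl _
    have hev := eventually_lt_of_limsup_lt hy' hbdd
    rw [eventually_atTop] at hev
    obtain ⟨N₁, hN₁⟩ := hev
    refine ⟨N₁, fun N hN hN1 => ?_⟩
    have hNpos : (0 : ℝ) < N := by exact_mod_cast hN1
    exact (div_lt_iff₀ hNpos).mp (hN₁ N hN)
  obtain ⟨N₁, hN₁⟩ := hSev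
  -- key claim: good times exist beyond any bound
  have key : ∀ (m j₀ : ℕ), ∃ a, m ≤ a ∧ a ∈ (if Even j₀ then A else B) ∧
      dist (f^[a] y) (f^[a] (if Even j₀ then p else q)) < ε := by
    intro m j₀
    set c := if Even j₀ then upperDensity A else upperDensity B with hcdef
    have hc : γ ≤ c := by
      by_cases hpar : Even j₀ <;> simp [hcdef, hpar, hγA, hγB]
    have hc0 : 0 < c := lt_of_lt_of_le hγ hc
    obtain ⟨K, hK1, hK2⟩ : ∃ K : ℕ, N₁ ≤ K ∧ 4 * (m : ℝ) / γ < K := by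
      refine ⟨max N₁ (⌈4 * (m : ℝ) / γ⌉₊ + 1), le_max_left _ _, ?_⟩
      have h2 : 4 * (m : ℝ) / γ ≤ (⌈4 * (m : ℝ) / γ⌉₊ : ℝ) := Nat.le_ceil _
      have h1 : (⌈4 * (m : ℝ) / γ⌉₊ + 1 : ℕ) ≤ max N₁ (⌈4 * (m : ℝ) / γ⌉₊ + 1) :=
        le_max_right _ _
      have h3 : ((⌈4 * (m : ℝ) / γ⌉₊ + 1 : ℕ) : ℝ) ≤ max N₁ (⌈4 * (m : ℝ) / γ⌉₊ + 1) := by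
        exact_mod_cast h1
      rw [Nat.cast_add, Nat.cast_one] at h3
      linarith
    obtain ⟨j, hjdef⟩ : ∃ j : ℕ, j = j₀ + 2 * K := ⟨_, rfl⟩
    have hjpar : (Even j ↔ Even j₀) := by
      rw [hjdef]
      simp [Nat.even_add]
    obtain ⟨N, hNdef⟩ : ∃ N : ℕ, N = n (j + 1) := ⟨_, rfl⟩
    have hNge : j + 1 ≤ N := by rw [hNdef]; exact hge _
    have hNK : K ≤ N := by omega
    have hN1 : 1 ≤ N := by omega
    have hNN₁ : N₁ ≤ N := le_trans hK1 hNK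
    have hNpos : (0 : ℝ) < N := by exact_mod_cast hN1
    have hNm : (m : ℝ) < γ / 4 * N := by
      have h1 : (K : ℝ) ≤ N := by exact_mod_cast hNK
      have h4 : 4 * (m : ℝ) / γ < N := by linarith
      rw [div_lt_iff₀ hγ] at h4
      nlinarith
    set cC : ℕ → ℕ :=
      fun t => ((Finset.range t).filter (· ∈ (if Even j₀ then A else B))).card with hcCdef
    have hgoodN : c / 2 * N ≤ (cC N : ℝ) := by
      have h3 := hn3 j
      rw [← hNdef] at h3
      by_cases hpar : Even j₀
      · rw [if_pos (hjpar.mpr hpar)] at h3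
        simpa [hcCdef, hcdef, hcAdef, hpar] using h3
      · rw [if_neg (fun hcc => hpar (hjpar.mp hcc))] at h3
        simpa [hcCdef, hcdef, hcBdef, hpar] using h3
    have hblock : ∀ a, n j ≤ a → a < N → (Even (idx a) ↔ Even j₀) := by
      intro a h1 h2
      rw [hNdef] at h2
      rw [hidxuniq a j h1 h2]
      exact hjpar
    have hsmall : (n j : ℝ) ≤ c / 8 * N := by
      have h1 : 8 * ((n j : ℝ)) / γ < (N : ℝ) := by rw [hNdef]; exact hn2 j
      rw [div_lt_iff₀ hγ] at h1
      nlinarith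
    set R := Finset.range N with hRdef
    set G := R.filter (fun a => a ∈ (if Even j₀ then A else B) ∧ (Even (idx a) ↔ Even j₀) ∧
      dist (f^[a] y) (f^[a] (if Even j₀ then p else q)) < ε) with hGdef
    set F1 := R.filter (fun a => ¬ (a ∈ (if Even j₀ then A else B))) with hF1def
    set F2 := R.filter (fun a => ¬ (Even (idx a) ↔ Even j₀)) with hF2def
    set F3 := R.filter (fun a => (Even (idx a) ↔ Even j₀) ∧
      ε ≤ dist (f^[a] y) (f^[a] (if Even j₀ then p else q))) with hF3def
    have hcover : R ⊆ G ∪ F1 ∪ F2 ∪ F3 := by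
      intro a ha
      simp only [hGdef, hF1def, hF2def, hF3def, Finset.mem_union, Finset.mem_filter]
      by_cases h1 : a ∈ (if Even j₀ then A else B)
      · by_cases h2 : (Even (idx a) ↔ Even j₀)
        · by_cases h3 : dist (f^[a] y) (f^[a] (if Even j₀ then p else q)) < ε
          · exact Or.inl (Or.inl (Or.inl ⟨ha, h1, h2, h3⟩))
          · exact Or.inr ⟨ha, h2, le_of_not_gt h3⟩
        · exact Or.inl (Or.inr ⟨ha, h2⟩)
      · exact Or.inl (Or.inl (Or.inr ⟨ha, h1⟩))
    have hcards : N ≤ G.card + F1.card + F2.card + F3.card := by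
      calc N = R.card := (Finset.card_range N).symm
        _ ≤ (G ∪ F1 ∪ F2 ∪ F3).card := Finset.card_le_card hcover
        _ ≤ (G ∪ F1 ∪ F2).card + F3.card := Finset.card_union_le _ _
        _ ≤ ((G ∪ F1).card + F2.card) + F3.card :=
            Nat.add_le_add_right (Finset.card_union_le _ _) _
        _ ≤ ((G.card + F1.card) + F2.card) + F3.card :=
            Nat.add_le_add_right (Nat.add_le_add_right (Finset.card_union_le _ _) _) _
    have hF1c : cC N + F1.card = N := by
      have := Finset.card_filter_add_card_filter_not
        (s := Finset.range N) (p := fun a => a ∈ (if Even j₀ then A else B))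
      simpa [hcCdef, hF1def, hRdef] using this
    have hF2c : F2.card ≤ n j := by
      have hsub : F2 ⊆ Finset.range (n j) := by
        intro a ha
        simp only [hF2def, hRdef, Finset.mem_filter, Finset.mem_range] at ha ⊢
        by_contra hcon
        push_neg at hcon
        exact ha.2 (hblock a hcon ha.1)
      simpa using Finset.card_le_card hsub
    have hF3c : (F3.card : ℝ) ≤ γ / 16 * N := by
      have hptwise : ∀ a ∈ F3, ε ≤ dist (f^[a] y) (x a) := by
        intro a ha
        simp only [hF3def, Finset.mem_filter] at ha
        obtain ⟨-, hiff, hdist⟩ := ha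
        have hxa : x a = f^[a] (if Even j₀ then p else q) := by
          rw [hxdef a]
          by_cases hpar : Even j₀
          · simp [hiff.mpr hpar, hpar]
          · have hno : ¬ Even (idx a) := fun hcc => hpar (hiff.mp hcc)
            simp [hno, hpar]
        rw [hxa]
        exact hdist
      have hsum3 : (F3.card : ℝ) * ε ≤ S N := by
        calc (F3.card : ℝ) * ε = ∑ _a ∈ F3, ε := by
              rw [Finset.sum_const, nsmul_eq_mul]
          _ ≤ ∑ a ∈ F3, dist (f^[a] y) (x a) := Finset.sum_le_sum hptwise
          _ ≤ S N := Finset.sum_le_sum_of_subset_of_nonneg (Finset.filter_subset _ _)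
              (fun i _ _ => dist_nonneg)
      have hSN := hN₁ N hNN₁ hN1
      have h5 : ε * (F3.card : ℝ) < ε * (γ / 16 * N) := by
        rw [hε'def] at hSN
        nlinarith
      exact le_of_lt (lt_of_mul_lt_mul_left h5 (le_of_lt hε))
    have hGc : (m : ℝ) < G.card := by
      have e1 : (N : ℝ) ≤ (G.card : ℝ) + F1.card + F2.card + F3.card := by
        exact_mod_cast hcards
      have e2 : (cC N : ℝ) + F1.card = N := by exact_mod_cast hF1c
      have e3 : (F2.card : ℝ) ≤ n j := by exact_mod_cast hF2c
      have e4 : 0 ≤ (N : ℝ) := le_of_lt hNpos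
      have e5 : γ / 16 * N ≤ c / 16 * N := by nlinarith
      have e6 : 5 * γ / 16 * N ≤ 5 * c / 16 * N := by nlinarith
      have e7 : 0 ≤ γ * N := by positivity
      linarith [hgoodN, hsmall, hF3c, hNm]
    have hexa : ∃ a ∈ G, m ≤ a := by
      by_contra hcon
      push_neg at hcon
      have hsub : G ⊆ Finset.range m := fun a ha => Finset.mem_range.mpr (hcon a ha)
      have h1 := Finset.card_le_card hsub
      rw [Finset.card_range] at h1
      have h2 : (G.card : ℝ) ≤ m := by exact_mod_cast h1
      linarith
    obtain ⟨a, haG, ham⟩ := hexa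
    rw [hGdef] at haG
    simp only [Finset.mem_filter] at haG
    exact ⟨a, ham, haG.2.1, haG.2.2.2⟩
  -- specialize
  have keyA : ∀ m, ∃ a, m ≤ a ∧ a ∈ A ∧ dist (f^[a] y) (f^[a] p) < ε := by
    intro m
    obtain ⟨a, h1, h2, h3⟩ := key m 0
    rw [if_pos Even.zero] at h2 h3
    exact ⟨a, h1, h2, h3⟩
  have keyB : ∀ m, ∃ a, m ≤ a ∧ a ∈ B ∧ dist (f^[a] y) (f^[a] q) < ε := by
    intro m
    obtain ⟨a, h1, h2, h3⟩ := key m 1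
    rw [if_neg (by decide : ¬ Even 1)] at h2 h3
    exact ⟨a, h1, h2, h3⟩
  choose gA hgA1 hgA2 hgA3 using keyA
  choose gB hgB1 hgB2 hgB3 using keyB
  obtain ⟨P, hP0, hPs⟩ : ∃ P : ℕ → ℕ × ℕ, P 0 = (gA 0, gB (gA 0 + 1)) ∧
      ∀ i, P (i + 1) = (gA ((P i).2 + 1), gB (gA ((P i).2 + 1) + 1)) :=
    ⟨fun i => Nat.rec (gA 0, gB (gA 0 + 1))
      (fun _ ih => (gA (ih.2 + 1), gB (gA (ih.2 + 1) + 1))) i, rfl, fun i => rfl⟩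
  have hP1 : ∀ i, ∃ m, P i = (gA m, gB (gA m + 1)) := by
    intro i
    cases i with
    | zero => exact ⟨0, hP0⟩
    | succ i' => exact ⟨(P i').2 + 1, hPs i'⟩
  have hPsucc : ∀ i, (P (i + 1)).1 = gA ((P i).2 + 1) := fun i => by rw [hPs i]
  refine ⟨y, fun i => (P i).1, fun i => (P i).2, ?_, ?_⟩
  · intro i
    constructor
    · show (P i).1 < (P i).2
      obtain ⟨m, hm⟩ := hP1 i
      rw [hm]
      exact lt_of_lt_of_le (Nat.lt_succ_self _) (hgB1 _)
    · show (P i).2 < (P (i + 1)).1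
      rw [hPsucc i]
      exact lt_of_lt_of_le (Nat.lt_succ_self _) (hgA1 _)
  · intro i
    show (P i).1 ∈ A ∧ (P i).2 ∈ B ∧ dist (f^[(P i).1] y) (f^[(P i).1] p) < ε ∧
      dist (f^[(P i).2] y) (f^[(P i).2] q) < ε
    obtain ⟨m, hm⟩ := hP1 i
    rw [hm]
    exact ⟨hgA2 m, hgB2 _, hgA3 m, hgB3 _⟩
end

section
/- Let (X,f) be a dynamical system with X a compact metric space and f : X → X continuous, and let A ⊆ X be a closed set with f(A) ⊆ A which contains the measure center of f. Then for every ε > 0 there is δ with 0 < δ < ε such that for every δ-average-pseudo-orbit {x_n}_{n≥0} of f there is a sequence {y_n}_{n≥0} contained in A which is an ε-average-pseudo-orbit of f and satisfies limsup_{n→∞} (1/n)·#{0 ≤ i < n : d(x_i, y_i) ≥ ε} < ε. -/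
open Filter Metric Set MeasureTheory Topology

set_option linter.unusedSectionVars false
set_option linter.unusedVariables false
set_option maxHeartbeats 1000000
open scoped ENNReal NNReal

section AuxMeas

variable {X : Type*} [MetricSpace X] [CompactSpace X]

/-- admissible test functions for a set `K`. -/
def admSet (K : Set X) : Set C(X, ℝ) :=
  {g | (∀ x, 0 ≤ g x) ∧ ∀ x ∈ K, 1 ≤ g x}

lemma one_mem_admSet (K : Set X) : (1 : C(X, ℝ)) ∈ admSet K :=
  ⟨fun _ => zero_le_one, fun _ _ => le_refl 1⟩

/-- the content value associated to a positive functional. -/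
noncomputable def lamL (L : C(X, ℝ) → ℝ) (K : Set X) : ℝ :=
  sInf (L '' admSet K)

variable {L : C(X, ℝ) → ℝ}
  (Ladd : ∀ g h : C(X, ℝ), L (g + h) = L g + L h)
  (Lmono : ∀ g h : C(X, ℝ), (∀ x, g x ≤ h x) → L g ≤ L h)
  (Lone : L 1 = 1)

section Basic

include Ladd Lmono

lemma L_zero : L 0 = 0 := by
  have := Ladd 0 0; simpa using this

lemma L_nonneg_mem {K : Set X} {g : C(X, ℝ)} (hg : g ∈ admSet K) : 0 ≤ L g := by
  have h0 : L 0 ≤ L g := Lmono 0 g (by simpa using hg.1)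
  simpa [L_zero Ladd Lmono] using h0

lemma lamL_bddBelow (K : Set X) : BddBelow (L '' admSet K) := by
  refine ⟨0, ?_⟩
  rintro a ⟨g, hg, rfl⟩
  exact L_nonneg_mem Ladd Lmono hg

lemma lamL_nonneg (K : Set X) : 0 ≤ lamL L K := by
  apply Real.sInf_nonneg
  rintro a ⟨g, hg, rfl⟩
  exact L_nonneg_mem Ladd Lmono hg

lemma lamL_le {K : Set X} {g : C(X, ℝ)} (hg : g ∈ admSet K) : lamL L K ≤ L g :=
  csInf_le (lamL_bddBelow Ladd Lmono K) ⟨g, hg, rfl⟩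

lemma le_lamL {K : Set X} {c : ℝ} (h : ∀ g ∈ admSet K, c ≤ L g) : c ≤ lamL L K := by
  apply le_csInf ⟨L 1, mem_image_of_mem L (one_mem_admSet K)⟩
  rintro a ⟨g, hg, rfl⟩
  exact h g hg

lemma lamL_mono {K₁ K₂ : Set X} (h : K₁ ⊆ K₂) : lamL L K₁ ≤ lamL L K₂ := by
  apply csInf_le_csInf (lamL_bddBelow Ladd Lmono K₁) ⟨L 1, mem_image_of_mem L (one_mem_admSet K₂)⟩
  apply image_mono
  rintro g ⟨hg0, hg1⟩
  exact ⟨hg0, fun x hx => hg1 x (h hx)⟩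

include Lone

lemma lamL_le_one (K : Set X) : lamL L K ≤ 1 := by
  have := lamL_le Ladd Lmono (one_mem_admSet K)
  rwa [Lone] at this

lemma lamL_union_le (K₁ K₂ : Set X) :
    lamL L (K₁ ∪ K₂) ≤ lamL L K₁ + lamL L K₂ := by
  refine le_of_forall_pos_le_add fun ε hε => ?_
  obtain ⟨a₁, ⟨g₁, hg₁, rfl⟩, h₁⟩ :=
    Real.lt_sInf_add_pos ⟨L 1, mem_image_of_mem L (one_mem_admSet K₁)⟩ (half_pos hε)
  obtain ⟨a₂, ⟨g₂, hg₂, rfl⟩, h₂⟩ :=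
    Real.lt_sInf_add_pos ⟨L 1, mem_image_of_mem L (one_mem_admSet K₂)⟩ (half_pos hε)
  have hmem : g₁ + g₂ ∈ admSet (K₁ ∪ K₂) := by
    constructor
    · intro x
      simpa using add_nonneg (hg₁.1 x) (hg₂.1 x)
    · intro x hx
      rcases hx with hx | hx
      · have := add_le_add (hg₁.2 x hx) (hg₂.1 x)
        simpa using this
      · have := add_le_add (hg₁.1 x) (hg₂.2 x hx)
        simpa [add_comm] using this
  calc lamL L (K₁ ∪ K₂) ≤ L (g₁ + g₂) := lamL_le Ladd Lmono hmem
    _ = L g₁ + L g₂ := Ladd _ _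
    _ ≤ lamL L K₁ + ε / 2 + (lamL L K₂ + ε / 2) := add_le_add h₁.le h₂.le
    _ = lamL L K₁ + lamL L K₂ + ε := by ring

lemma lamL_add_le_union {K₁ K₂ : Set X} (h₁ : IsClosed K₁) (h₂ : IsClosed K₂)
    (hd : Disjoint K₁ K₂) :
    lamL L K₁ + lamL L K₂ ≤ lamL L (K₁ ∪ K₂) := by
  obtain ⟨χ, hχ₁, hχ₂, hχI⟩ := exists_continuous_zero_one_of_isClosed h₁ h₂ hd
  refine le_lamL Ladd Lmono fun g hg => ?_
  have hmem₁ : g * (1 - χ) ∈ admSet K₁ := by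
    constructor
    · intro x
      simpa using mul_nonneg (hg.1 x) (by simpa using (hχI x).2)
    · intro x hx
      have h0 : χ x = 0 := hχ₁ hx
      have := hg.2 x (Or.inl hx)
      simpa [h0] using this
  have hmem₂ : g * χ ∈ admSet K₂ := by
    constructor
    · intro x
      exact mul_nonneg (hg.1 x) (hχI x).1
    · intro x hx
      have h1 : χ x = 1 := hχ₂ hx
      have := hg.2 x (Or.inr hx)
      simpa [h1] using this
  have hsum : g * (1 - χ) + g * χ = g := by ext x; simp; ring
  calc lamL L K₁ + lamL L K₂ ≤ L (g * (1 - χ)) + L (g * χ) :=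
        add_le_add (lamL_le Ladd Lmono hmem₁) (lamL_le Ladd Lmono hmem₂)
    _ = L (g * (1 - χ) + g * χ) := (Ladd _ _).symm
    _ = L g := by rw [hsum]

end Basic

end AuxMeas

theorem exists_invMeasure {X : Type*} [MetricSpace X] [CompactSpace X] [MeasurableSpace X]
    [BorelSpace X] (F : C(X, X)) (L : C(X, ℝ) → ℝ)
    (Ladd : ∀ g h : C(X, ℝ), L (g + h) = L g + L h)
    (Lmono : ∀ g h : C(X, ℝ), (∀ x, g x ≤ h x) → L g ≤ L h)
    (Lone : L 1 = 1)
    (Lcomp : ∀ g : C(X, ℝ), L (g.comp F) = L g) :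
    ∃ μ : Measure X, InvariantProb F μ ∧
      ∀ (c : ℝ) (K W : Set X), IsClosed K → IsOpen W → K ⊆ W →
        (∀ g : C(X, ℝ), (∀ x, 0 ≤ g x) → (∀ x ∈ K, 1 ≤ g x) → c ≤ L g) →
        ENNReal.ofReal c ≤ μ W := by
  classical
  rcases isEmpty_or_nonempty X with hX | hX
  · exfalso
    have h10 : (1 : C(X, ℝ)) = 0 := by ext x; exact isEmptyElim x
    rw [h10, L_zero Ladd Lmono] at Lone
    norm_num at Lone
  -- the content
  set c : Content X :=
    { toFun := fun K => (lamL L K.1).toNNReal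
      mono' := fun K₁ K₂ h => Real.toNNReal_mono (lamL_mono Ladd Lmono h)
      sup_disjoint' := by
        intro K₁ K₂ hd hc₁ hc₂
        have he : lamL L ((K₁ ⊔ K₂).carrier) = lamL L K₁.carrier + lamL L K₂.carrier := by
          have hcoe : (K₁ ⊔ K₂).carrier = K₁.carrier ∪ K₂.carrier := rfl
          rw [hcoe]
          exact le_antisymm (lamL_union_le Ladd Lmono Lone K₁.carrier K₂.carrier)
            (lamL_add_le_union Ladd Lmono Lone hc₁ hc₂ hd)
        show (lamL L (K₁ ⊔ K₂).carrier).toNNReal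
            = (lamL L K₁.carrier).toNNReal + (lamL L K₂.carrier).toNNReal
        rw [he, Real.toNNReal_add (lamL_nonneg Ladd Lmono _) (lamL_nonneg Ladd Lmono _)]
      sup_le' := by
        intro K₁ K₂
        have hcoe : (K₁ ⊔ K₂).carrier = K₁.carrier ∪ K₂.carrier := rfl
        show (lamL L (K₁ ⊔ K₂).carrier).toNNReal
            ≤ (lamL L K₁.carrier).toNNReal + (lamL L K₂.carrier).toNNReal
        calc (lamL L (K₁ ⊔ K₂).carrier).toNNReal
            ≤ (lamL L K₁.carrier + lamL L K₂.carrier).toNNReal := by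
              apply Real.toNNReal_mono
              rw [hcoe]
              exact lamL_union_le Ladd Lmono Lone K₁.carrier K₂.carrier
          _ ≤ (lamL L K₁.carrier).toNNReal + (lamL L K₂.carrier).toNNReal :=
              Real.toNNReal_add_le } with hcdef
  set μ : Measure X := c.measure with hμdef
  have hμopen : ∀ (U : Set X) (hU : IsOpen U), μ U = c.innerContent ⟨U, hU⟩ := by
    intro U hU
    rw [hμdef, Content.measure_apply c hU.measurableSet]
    exact c.outerMeasure_opens ⟨U, hU⟩
  -- μ is a probability measure
  have hμuniv : μ univ = 1 := by
    rw [hμopen univ isOpen_univ]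
    apply le_antisymm
    · apply iSup_le
      intro K
      apply iSup_le
      intro _
      show ((lamL L K.carrier).toNNReal : ℝ≥0∞) ≤ 1
      have h1 : (lamL L K.carrier).toNNReal ≤ 1 :=
        Real.toNNReal_le_one.mpr (lamL_le_one Ladd Lmono Lone (X := X) K.carrier)
      exact_mod_cast h1
    · have hterm := c.le_innerContent ⟨univ, isCompact_univ⟩ ⟨univ, isOpen_univ⟩
        (subset_refl _)
      refine le_trans ?_ hterm
      show (1 : ℝ≥0∞) ≤ ((lamL L (univ : Set X)).toNNReal : ℝ≥0∞)
      have huniv : lamL L (univ : Set X) = 1 := by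
        apply le_antisymm (lamL_le_one Ladd Lmono Lone _)
        refine le_lamL Ladd Lmono fun g hg => ?_
        have := Lmono 1 g (fun x => by simpa using hg.2 x trivial)
        rwa [Lone] at this
      rw [huniv]
      simp
  have hprob : IsProbabilityMeasure μ := ⟨hμuniv⟩
  have hWLC : WeaklyLocallyCompactSpace X := inferInstance
  have hreg : μ.Regular := by rw [hμdef]; infer_instance
  -- invariance on open sets
  have hinv_open : ∀ (U : Set X), IsOpen U → μ U ≤ μ (F ⁻¹' U) := by
    intro U hU
    have hUF : IsOpen (F ⁻¹' U) := hU.preimage F.continuous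
    rw [hμopen U hU, hμopen _ hUF]
    apply iSup_le
    intro K
    apply iSup_le
    intro hKU
    obtain ⟨V, hVopen, hKV, hclV⟩ :=
      normal_exists_closure_subset K.isCompact.isClosed hU hKU
    obtain ⟨ψ, hψ0, hψ1, hψI⟩ := exists_continuous_zero_one_of_isClosed
      hVopen.isClosed_compl K.isCompact.isClosed
      (disjoint_left.mpr fun x hx hxK => hx (hKV hxK))
    set K' : TopologicalSpace.Compacts X :=
      ⟨F ⁻¹' closure V, (isClosed_closure.preimage F.continuous).isCompact⟩ with hK'def
    have hK'U : (K' : Set X) ⊆ F ⁻¹' U := fun x hx => hclV hx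
    have hlam : lamL L K.carrier ≤ lamL L K'.carrier := by
      have h1 : lamL L K.carrier ≤ L ψ := by
        apply lamL_le Ladd Lmono
        exact ⟨fun x => (hψI x).1, fun x hx => (hψ1 hx).symm.le⟩
      have h2 : L ψ ≤ lamL L K'.carrier := by
        refine le_lamL Ladd Lmono fun g hg => ?_
        have hmono : L (ψ.comp F) ≤ L g := by
          apply Lmono
          intro x
          by_cases hx : F x ∈ closure V
          · exact le_trans (hψI (F x)).2 (hg.2 x hx)
          · have hx' : F x ∈ Vᶜ := fun hmem => hx (subset_closure hmem)
            have h0 : ψ (F x) = 0 := hψ0 hx'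
            simp only [ContinuousMap.comp_apply]
            rw [h0]
            exact hg.1 x
        calc L ψ = L (ψ.comp F) := (Lcomp ψ).symm
          _ ≤ L g := hmono
      exact h1.trans h2
    refine le_trans ?_ (c.le_innerContent K' ⟨F ⁻¹' U, hUF⟩ hK'U)
    show ((lamL L K.carrier).toNNReal : ℝ≥0∞) ≤ ((lamL L K'.carrier).toNNReal : ℝ≥0∞)
    exact_mod_cast Real.toNNReal_mono hlam
  -- invariance on compact sets
  have hinv_cpt : ∀ (K : Set X), IsCompact K → μ K ≤ μ (F ⁻¹' K) := by
    intro K hK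
    rcases K.eq_empty_or_nonempty with rfl | hKne
    · simp
    have hKcl : IsClosed K := hK.isClosed
    set U : ℕ → Set X := fun n => {p | infDist p K < 1 / (n + 1)} with hUdef
    have hUopen : ∀ n, IsOpen (U n) := fun n =>
      isOpen_lt (continuous_infDist_pt K) continuous_const
    have hKU : ∀ n, K ⊆ U n := by
      intro n p hp
      have : infDist p K = 0 := infDist_zero_of_mem hp
      simp only [hUdef, mem_setOf_eq, this]
      positivity
    have hUanti : Antitone U := by
      intro m n hmn p hp
      simp only [hUdef, mem_setOf_eq] at hp ⊢
      refine lt_of_lt_of_le hp ?_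
      apply one_div_le_one_div_of_le
      · positivity
      · exact_mod_cast add_le_add_left (Nat.cast_le.mpr hmn) 1
    have hUint : ⋂ n, U n = K := by
      apply subset_antisymm
      · intro p hp
        have h0 : infDist p K ≤ 0 := by
          by_contra hcon
          push_neg at hcon
          obtain ⟨n, hn⟩ := exists_nat_one_div_lt hcon
          exact absurd (mem_iInter.mp hp n) (by simp only [hUdef, mem_setOf_eq]; push_cast; linarith)
        have h00 : infDist p K = 0 := le_antisymm h0 infDist_nonneg
        rw [hKcl.mem_iff_infDist_zero hKne]
        exact h00
      · exact subset_iInter hKU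
    have hmeas : μ (F ⁻¹' K) = ⨅ n, μ (F ⁻¹' U n) := by
      rw [← hUint, preimage_iInter]
      apply Directed.measure_iInter
      · exact fun n => ((hUopen n).preimage F.continuous).measurableSet.nullMeasurableSet
      · exact fun m n => ⟨max m n, preimage_mono (hUanti (le_max_left m n)),
          preimage_mono (hUanti (le_max_right m n))⟩
      · exact ⟨0, measure_ne_top μ _⟩
    rw [hmeas]
    refine le_iInf fun n => le_trans (measure_mono (hKU n)) (hinv_open (U n) (hUopen n))
  -- invariance on measurable sets (one inequality)
  have hinv_le : ∀ (B : Set X), MeasurableSet B → μ B ≤ μ (F ⁻¹' B) := by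
    intro B hB
    rw [hB.measure_eq_iSup_isCompact_of_ne_top (measure_ne_top μ B)]
    apply iSup_le; intro K; apply iSup_le; intro hKB; apply iSup_le; intro hK
    exact le_trans (hinv_cpt K hK) (measure_mono (preimage_mono hKB))
  have hinv : ∀ (B : Set X), MeasurableSet B → μ (F ⁻¹' B) = μ B := by
    intro B hB
    have h1 := hinv_le B hB
    have h2 := hinv_le Bᶜ hB.compl
    have hBF : MeasurableSet (F ⁻¹' B) := hB.preimage F.continuous.measurable
    have e1 : μ B + μ Bᶜ = 1 := by
      rw [measure_add_measure_compl hB, hμuniv]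
    have e2 : μ (F ⁻¹' B) + μ (F ⁻¹' B)ᶜ = 1 := by
      rw [measure_add_measure_compl hBF, hμuniv]
    rw [← preimage_compl] at e2
    refine le_antisymm ?_ h1
    have : μ (F ⁻¹' B) + μ (F ⁻¹' Bᶜ) ≤ μ B + μ (F ⁻¹' Bᶜ) := by
      rw [e2, ← e1]
      exact add_le_add_right h2 _
    exact ENNReal.le_of_add_le_add_right (measure_ne_top μ _) this
  refine ⟨μ, ⟨hprob, hinv⟩, ?_⟩
  -- lower bound on open sets
  intro c' K W hK hW hKW hc'
  obtain ⟨V, hVopen, hKV, hclV⟩ := normal_exists_closure_subset hK hW hKW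
  set K' : TopologicalSpace.Compacts X := ⟨closure V, isClosed_closure.isCompact⟩ with hK'def
  have hlam : c' ≤ lamL L K'.carrier := by
    refine le_lamL Ladd Lmono fun g hg => ?_
    exact hc' g hg.1 fun x hx => hg.2 x (subset_closure (hKV hx))
  rw [hμopen W hW]
  refine le_trans ?_ (c.le_innerContent K' ⟨W, hW⟩ hclV)
  show ENNReal.ofReal c' ≤ ((lamL L K'.carrier).toNNReal : ℝ≥0∞)
  rw [ENNReal.ofReal]
  exact_mod_cast Real.toNNReal_mono hlam


theorem visit_density_le {X : Type*} [MetricSpace X] [CompactSpace X] [MeasurableSpace X]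
    [BorelSpace X] (f : X → X) (hf : Continuous f) (K : Set X) (hK : IsClosed K)
    (hKmc : K ∩ measureCenter f = ∅) (θ : ℝ) (hθ : 0 < θ) :
    ∃ δ : ℝ, 0 < δ ∧ ∃ M : ℕ, 0 < M ∧ ∀ (z : ℕ → X) (n : ℕ), M ≤ n →
      (∑ i ∈ Finset.range n, dist (f (z i)) (z (i + 1))) < δ * n →
      (({i | i < n ∧ z i ∈ K}).ncard : ℝ) ≤ θ * n := by
  classical
  by_contra hcon
  push_neg at hcon
  have H : ∀ m : ℕ, ∃ (z : ℕ → X) (n : ℕ), (m + 1 ≤ n) ∧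
      ((∑ i ∈ Finset.range n, dist (f (z i)) (z (i + 1))) < (1 / ((m : ℝ) + 1)) * n) ∧
      θ * n < (({i | i < n ∧ z i ∈ K}).ncard : ℝ) := by
    intro m
    exact hcon (1 / ((m : ℝ) + 1)) (by positivity) (m + 1) (Nat.succ_pos m)
  choose z nseq hge hsum hcount using H
  have hnpos : ∀ m, 0 < nseq m := fun m => lt_of_lt_of_le (Nat.succ_pos m) (hge m)
  have hnR : ∀ m, (0 : ℝ) < nseq m := fun m => by exact_mod_cast hnpos m
  -- the empirical averages
  set avg : C(X, ℝ) → ℕ → ℝ :=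
    fun g m => (∑ i ∈ Finset.range (nseq m), g (z m i)) / (nseq m) with havgdef
  have havg_abs : ∀ (g : C(X, ℝ)) (m : ℕ), |avg g m| ≤ ‖g‖ := by
    intro g m
    rw [havgdef]
    simp only
    rw [abs_div, abs_of_pos (hnR m), div_le_iff₀ (hnR m)]
    calc |∑ i ∈ Finset.range (nseq m), g (z m i)|
        ≤ ∑ i ∈ Finset.range (nseq m), |g (z m i)| := Finset.abs_sum_le_sum_abs _ _
      _ ≤ ∑ _i ∈ Finset.range (nseq m), ‖g‖ := by
          refine Finset.sum_le_sum fun i _ => ?_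
          rw [← Real.norm_eq_abs]
          exact g.norm_coe_le_norm (z m i)
      _ = (nseq m : ℝ) * ‖g‖ := by
          rw [Finset.sum_const, Finset.card_range, nsmul_eq_mul]
      _ = ‖g‖ * (nseq m : ℝ) := mul_comm _ _
  set 𝒰 : Ultrafilter ℕ := Ultrafilter.of atTop with h𝒰def
  have h𝒰 : (𝒰 : Filter ℕ) ≤ atTop := Ultrafilter.of_le _
  have hLex : ∀ g : C(X, ℝ), ∃ c : ℝ, Tendsto (avg g) (𝒰 : Filter ℕ) (𝓝 c) := by
    intro g
    have hsub : (𝒰.map (avg g) : Filter ℝ) ≤ Filter.principal (Icc (-‖g‖) ‖g‖) := by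
      rw [Filter.le_principal_iff]
      have : ∀ m, avg g m ∈ Icc (-‖g‖) ‖g‖ := fun m => abs_le.mp (havg_abs g m)
      exact Filter.mem_map.mpr (Filter.univ_mem' this)
    obtain ⟨c, -, hc⟩ := isCompact_Icc.ultrafilter_le_nhds (𝒰.map (avg g)) hsub
    exact ⟨c, hc⟩
  choose L hL using hLex
  -- properties of L
  have Ladd : ∀ g h : C(X, ℝ), L (g + h) = L g + L h := by
    intro g h
    refine tendsto_nhds_unique (hL (g + h)) (Tendsto.congr (fun m => ?_) ((hL g).add (hL h)))
    rw [havgdef]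
    simp only [ContinuousMap.add_apply]
    rw [Finset.sum_add_distrib, add_div]
  have Lmono : ∀ g h : C(X, ℝ), (∀ x, g x ≤ h x) → L g ≤ L h := by
    intro g h hgh
    refine le_of_tendsto_of_tendsto' (hL g) (hL h) fun m => ?_
    rw [havgdef]
    simp only
    have hss : (∑ i ∈ Finset.range (nseq m), g (z m i))
        ≤ ∑ i ∈ Finset.range (nseq m), h (z m i) :=
      Finset.sum_le_sum fun i _ => hgh (z m i)
    gcongr
  have Lone : L 1 = 1 := by
    refine tendsto_nhds_unique (hL 1) (Tendsto.congr (fun m => ?_) tendsto_const_nhds)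
    rw [havgdef]
    simp only [ContinuousMap.one_apply]
    rw [Finset.sum_const, Finset.card_range, nsmul_eq_mul, mul_one,
      div_self (ne_of_gt (hnR m))]
  set F : C(X, X) := ⟨f, hf⟩ with hFdef
  have Lcomp : ∀ g : C(X, ℝ), L (g.comp F) = L g := by
    intro g
    have hkey : ∀ r : ℝ, 0 < r → |L (g.comp F) - L g| ≤ r := by
      intro r hr
      obtain ⟨s, hs, hmod⟩ := Metric.uniformContinuous_iff.mp
        (CompactSpace.uniformContinuous_of_continuous g.continuous) r hr
      have hq : (0 : ℝ) ≤ 2 * ‖g‖ / s := by positivity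
      have hgb : ∀ p : X, |g p| ≤ ‖g‖ := fun p => by
        rw [← Real.norm_eq_abs]; exact g.norm_coe_le_norm p
      have hptw : ∀ (a b : X), |g a - g b| ≤ r + (2 * ‖g‖ / s) * dist a b := by
        intro a b
        by_cases hd : dist a b < s
        · have h1 : dist (g a) (g b) < r := hmod hd
          rw [Real.dist_eq] at h1
          have h2 : 0 ≤ (2 * ‖g‖ / s) * dist a b := mul_nonneg hq dist_nonneg
          linarith
        · push_neg at hd
          have h1 : |g a - g b| ≤ 2 * ‖g‖ := by
            calc |g a - g b| ≤ |g a| + |g b| := abs_sub _ _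
              _ ≤ ‖g‖ + ‖g‖ := add_le_add (hgb a) (hgb b)
              _ = 2 * ‖g‖ := by ring
          have h2 : (2 * ‖g‖ / s) * s ≤ (2 * ‖g‖ / s) * dist a b :=
            mul_le_mul_of_nonneg_left hd hq
          have h3 : (2 * ‖g‖ / s) * s = 2 * ‖g‖ := div_mul_cancel₀ _ (ne_of_gt hs)
          linarith
      have hest : ∀ m : ℕ, |avg (g.comp F) m - avg g m|
          ≤ r + (2 * ‖g‖ / s) * (1 / ((m : ℝ) + 1)) + 2 * ‖g‖ / ((m : ℝ) + 1) := by
        intro m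
        set n := nseq m with hndef
        have hA : avg (g.comp F) m - avg g m
            = ((∑ i ∈ Finset.range n, g (f (z m i)))
              - ∑ i ∈ Finset.range n, g (z m i)) / n := by
          rw [havgdef]
          simp only [ContinuousMap.comp_apply]
          rw [div_sub_div_same]
          rfl
        have hsum2 : ∑ i ∈ Finset.range n, g (z m (i + 1))
            = ∑ i ∈ Finset.range n, g (z m i) + g (z m n) - g (z m 0) := by
          have h1 := Finset.sum_range_succ (fun i => g (z m i)) n
          have h2 := Finset.sum_range_succ' (fun i => g (z m i)) n
          rw [h1] at h2
          linarith
        have hsplit : (∑ i ∈ Finset.range n, g (f (z m i)))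
            - ∑ i ∈ Finset.range n, g (z m i)
            = (∑ i ∈ Finset.range n, (g (f (z m i)) - g (z m (i + 1))))
              + (g (z m n) - g (z m 0)) := by
          rw [Finset.sum_sub_distrib, hsum2]
          ring
        have hb1 : |∑ i ∈ Finset.range n, (g (f (z m i)) - g (z m (i + 1)))|
            ≤ n * r + (2 * ‖g‖ / s) * ((1 / ((m : ℝ) + 1)) * n) := by
          calc |∑ i ∈ Finset.range n, (g (f (z m i)) - g (z m (i + 1)))|
              ≤ ∑ i ∈ Finset.range n, |g (f (z m i)) - g (z m (i + 1))| :=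
                Finset.abs_sum_le_sum_abs _ _
            _ ≤ ∑ i ∈ Finset.range n, (r + (2 * ‖g‖ / s) * dist (f (z m i)) (z m (i + 1))) :=
                Finset.sum_le_sum fun i _ => hptw _ _
            _ = n * r + (2 * ‖g‖ / s) * ∑ i ∈ Finset.range n, dist (f (z m i)) (z m (i + 1)) := by
                rw [Finset.sum_add_distrib, Finset.sum_const, Finset.card_range, nsmul_eq_mul,
                  ← Finset.mul_sum]
            _ ≤ n * r + (2 * ‖g‖ / s) * ((1 / ((m : ℝ) + 1)) * n) := by
                have := (hsum m).le
                have := mul_le_mul_of_nonneg_left this hq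
                linarith
        have hb2 : |(∑ i ∈ Finset.range n, g (f (z m i))) - ∑ i ∈ Finset.range n, g (z m i)|
            ≤ n * r + (2 * ‖g‖ / s) * ((1 / ((m : ℝ) + 1)) * n) + 2 * ‖g‖ := by
          rw [hsplit]
          calc |(∑ i ∈ Finset.range n, (g (f (z m i)) - g (z m (i + 1))))
                + (g (z m n) - g (z m 0))|
              ≤ |∑ i ∈ Finset.range n, (g (f (z m i)) - g (z m (i + 1)))|
                + |g (z m n) - g (z m 0)| := abs_add_le _ _
            _ ≤ n * r + (2 * ‖g‖ / s) * ((1 / ((m : ℝ) + 1)) * n) + 2 * ‖g‖ := by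
                have h1 : |g (z m n) - g (z m 0)| ≤ 2 * ‖g‖ := by
                  calc |g (z m n) - g (z m 0)| ≤ |g (z m n)| + |g (z m 0)| := abs_sub _ _
                    _ ≤ ‖g‖ + ‖g‖ := add_le_add (hgb _) (hgb _)
                    _ = 2 * ‖g‖ := by ring
                linarith [hb1]
        rw [hA, abs_div, abs_of_pos (hnR m), div_le_iff₀ (hnR m)]
        have hmn : ((m : ℝ) + 1) ≤ n := by
          have := hge m
          exact_mod_cast this
        have hm1 : (0 : ℝ) < (m : ℝ) + 1 := by positivity
        have h2g : (0 : ℝ) ≤ 2 * ‖g‖ := by positivity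
        have hkey1 : 2 * ‖g‖ ≤ (2 * ‖g‖ / ((m : ℝ) + 1)) * n := by
          rw [div_mul_eq_mul_div, le_div_iff₀ hm1]
          exact mul_le_mul_of_nonneg_left hmn h2g
        have hexp : (r + 2 * ‖g‖ / s * (1 / ((m : ℝ) + 1)) + 2 * ‖g‖ / ((m : ℝ) + 1)) * n
            = n * r + (2 * ‖g‖ / s) * ((1 / ((m : ℝ) + 1)) * n)
              + (2 * ‖g‖ / ((m : ℝ) + 1)) * n := by ring
        rw [hexp]
        linarith [hb2]
      have h1 : Tendsto (fun m => |avg (g.comp F) m - avg g m|) (𝒰 : Filter ℕ)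
          (𝓝 |L (g.comp F) - L g|) := ((hL (g.comp F)).sub (hL g)).abs
      have h2 : Tendsto (fun m : ℕ => r + (2 * ‖g‖ / s) * (1 / ((m : ℝ) + 1))
          + 2 * ‖g‖ / ((m : ℝ) + 1)) atTop (𝓝 r) := by
        have t0 : Tendsto (fun m : ℕ => 1 / ((m : ℝ) + 1)) atTop (𝓝 0) :=
          tendsto_one_div_add_atTop_nhds_zero_nat
        have := (tendsto_const_nhds (x := r) (f := atTop (α := ℕ))).add
          ((t0.const_mul (2 * ‖g‖ / s)).add (t0.const_mul (2 * ‖g‖)))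
        simp only [mul_zero, add_zero] at this
        refine this.congr fun m => ?_
        rw [mul_one_div]
        ring
      exact le_of_tendsto_of_tendsto' h1 (h2.mono_left h𝒰) hest
    have habs : |L (g.comp F) - L g| ≤ 0 := by
      refine le_of_forall_pos_le_add fun r hr => ?_
      rw [zero_add]
      exact hkey r hr
    have := abs_nonpos_iff.mp habs
    linarith [sub_eq_zero.mp this]
  -- obtain the invariant measure
  obtain ⟨μ, hμinv, hμlow⟩ := exists_invMeasure F L Ladd Lmono Lone Lcomp
  -- cover K by finitely many universally null open sets
  have hKsub : K ⊆ ⋃ (U : {U : Set X // IsOpen U ∧ UnivNull f U}), (U : Set X) := by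
    intro p hp
    have hpmc : p ∉ measureCenter f := by
      intro hpmc
      have : p ∈ K ∩ measureCenter f := ⟨hp, hpmc⟩
      rw [hKmc] at this
      exact this
    have : p ∈ ⋃ U ∈ {U : Set X | IsOpen U ∧ UnivNull f U}, U := by
      by_contra hcon2
      exact hpmc hcon2
    obtain ⟨U, hU, hpU⟩ := mem_iUnion₂.mp this
    exact mem_iUnion.mpr ⟨⟨U, hU⟩, hpU⟩
  obtain ⟨t, ht⟩ := (hK.isCompact).elim_finite_subcover
    (fun U : {U : Set X // IsOpen U ∧ UnivNull f U} => (U : Set X))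
    (fun U => U.2.1) hKsub
  set W : Set X := ⋃ U ∈ t, (U : Set X) with hWdef
  have hWopen : IsOpen W := isOpen_biUnion fun U _ => U.2.1
  have hμW0 : μ W = 0 := by
    rw [hWdef]
    refine (measure_biUnion_null_iff t.countable_toSet).mpr fun U _ => ?_
    exact U.2.2 μ hμinv
  have hμWθ : ENNReal.ofReal θ ≤ μ W := by
    refine hμlow θ K W hK hWopen ht fun g hg0 hg1 => ?_
    refine ge_of_tendsto (hL g) (Filter.univ_mem' fun m => ?_)
    show θ ≤ avg g m
    rw [havgdef]
    simp only
    rw [le_div_iff₀ (hnR m)]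
    have hset : {i | i < nseq m ∧ z m i ∈ K}
        = ↑((Finset.range (nseq m)).filter (fun i => z m i ∈ K)) := by
      ext i
      simp [Finset.mem_filter, Finset.mem_range]
    have hcard : (({i | i < nseq m ∧ z m i ∈ K}).ncard : ℝ)
        = (((Finset.range (nseq m)).filter (fun i => z m i ∈ K)).card : ℝ) := by
      rw [hset, Set.ncard_coe_finset]
    have hsum_ge : (((Finset.range (nseq m)).filter (fun i => z m i ∈ K)).card : ℝ)
        ≤ ∑ i ∈ Finset.range (nseq m), g (z m i) := by
      calc (((Finset.range (nseq m)).filter (fun i => z m i ∈ K)).card : ℝ)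
          = ∑ _i ∈ (Finset.range (nseq m)).filter (fun i => z m i ∈ K), (1 : ℝ) := by
            rw [Finset.sum_const, nsmul_eq_mul, mul_one]
        _ ≤ ∑ i ∈ (Finset.range (nseq m)).filter (fun i => z m i ∈ K), g (z m i) :=
            Finset.sum_le_sum fun i hi => hg1 _ (Finset.mem_filter.mp hi).2
        _ ≤ ∑ i ∈ Finset.range (nseq m), g (z m i) :=
            Finset.sum_le_sum_of_subset_of_nonneg (Finset.filter_subset _ _)
              fun i _ _ => hg0 (z m i)
    have := (hcount m).le
    rw [hcard] at this
    calc θ * (nseq m : ℝ) ≤ (((Finset.range (nseq m)).filter (fun i => z m i ∈ K)).card : ℝ) :=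
          this
      _ ≤ _ := hsum_ge
  rw [hμW0] at hμWθ
  have : (0 : ℝ≥0∞) < ENNReal.ofReal θ := ENNReal.ofReal_pos.mpr hθ
  exact absurd (le_antisymm hμWθ zero_le) (ne_of_gt this)


/-- Average pseudo-orbits can be replaced, up to a small density
of errors, by average pseudo-orbits inside a closed invariant set containing
the measure center. -/
theorem avgPseudoOrbit_approx_in_measureCenter_superset
    {X : Type*} [MetricSpace X] [CompactSpace X] [MeasurableSpace X] [BorelSpace X]
    (f : X → X) (hf : Continuous f)
    (A : Set X) (hA : IsClosed A) (hfA : Set.MapsTo f A A)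
    (hmc : measureCenter f ⊆ A) :
    ∀ ε : ℝ, 0 < ε → ∃ δ : ℝ, 0 < δ ∧ δ < ε ∧
      ∀ x : ℕ → X, AvgPseudoOrbit f δ x →
        ∃ y : ℕ → X, (∀ n : ℕ, y n ∈ A) ∧ AvgPseudoOrbit f ε y ∧
          limsup (fun n : ℕ =>
            (({i : ℕ | i < n ∧ ε ≤ dist (x i) (y i)}).ncard : ℝ) / n) atTop < ε := by
  classical
  intro ε hε
  set D := Metric.diam (univ : Set X) with hDdef
  have hD0 : 0 ≤ D := Metric.diam_nonneg
  have hDb : ∀ a b : X, dist a b ≤ D := fun a b =>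
    Metric.dist_le_diam_of_mem isCompact_univ.isBounded trivial trivial
  -- a helper for counting
  have hcount_eq : ∀ (P : ℕ → Prop) (n : ℕ), (({i | i < n ∧ P i}).ncard : ℝ)
      = (((Finset.range n).filter P).card : ℝ) := by
    intro P n
    have hset : {i | i < n ∧ P i} = ↑((Finset.range n).filter P) := by
      ext i; simp [Finset.mem_filter, Finset.mem_range]
    rw [hset, Set.ncard_coe_finset]
  rcases A.eq_empty_or_nonempty with hA0 | ⟨a0, ha0⟩
  · -- A is empty: then there are no δ-average-pseudo-orbits at all
    have hmcE : measureCenter f = ∅ := eq_empty_of_subset_empty (hA0 ▸ hmc)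
    obtain ⟨δ₀, hδ₀, M, hM, hlem⟩ := visit_density_le f hf univ isClosed_univ
      (by rw [hmcE, inter_empty]) (1 / 2) one_half_pos
    refine ⟨min δ₀ (ε / 2), lt_min hδ₀ (by linarith),
      lt_of_le_of_lt (min_le_right _ _) (by linarith), ?_⟩
    intro x hx
    exfalso
    obtain ⟨N, hNpos, hxN⟩ := hx
    set n := max M N with hndef
    have hnM : M ≤ n := le_max_left _ _
    have hnN : N ≤ n := le_max_right _ _
    have hnpos : 0 < n := lt_of_lt_of_le hM hnM
    have hnR : (0 : ℝ) < n := by exact_mod_cast hnpos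
    have hsum := hxN n hnN 0
    simp only [add_zero] at hsum
    rw [div_lt_iff₀ hnR] at hsum
    have hsum' : (∑ i ∈ Finset.range n, dist (f (x i)) (x (i + 1))) < δ₀ * n :=
      lt_of_lt_of_le hsum (mul_le_mul_of_nonneg_right (min_le_left _ _) hnR.le)
    have hcard := hlem x n hnM hsum'
    have hcn : (({i | i < n ∧ x i ∈ (univ : Set X)}).ncard : ℝ) = (n : ℝ) := by
      rw [hcount_eq]
      simp [Finset.filter_true_of_mem]
    rw [hcn] at hcard
    have h1n : (1 : ℝ) ≤ n := by exact_mod_cast hnpos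
    linarith
  · -- A nonempty
    obtain ⟨ε'', hε''pos, hmod⟩ := Metric.uniformContinuous_iff.mp
      (CompactSpace.uniformContinuous_of_continuous hf) (ε / 8) (by positivity)
    set ε' := min (ε / 8) (ε'' / 2) with hε'def
    have hε'pos : 0 < ε' := lt_min (by positivity) (by positivity)
    have hε'8 : ε' ≤ ε / 8 := min_le_left _ _
    have hε'' : ε' < ε'' := lt_of_le_of_lt (min_le_right _ _) (by linarith)
    set Kb := {p : X | ε' ≤ Metric.infDist p A} with hKbdef
    have hKbclosed : IsClosed Kb := isClosed_le continuous_const (continuous_infDist_pt A)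
    have hKbmc : Kb ∩ measureCenter f = ∅ := by
      refine eq_empty_iff_forall_notMem.mpr ?_
      rintro p ⟨hpK, hpmc⟩
      have hpA : p ∈ A := hmc hpmc
      have h0 : Metric.infDist p A = 0 := Metric.infDist_zero_of_mem hpA
      have : ε' ≤ (0 : ℝ) := h0 ▸ hpK
      linarith
    set θ := min (ε / 2) (ε / (8 * (D + 1))) with hθdef
    have hθpos : 0 < θ := lt_min (by linarith) (by positivity)
    obtain ⟨δ₀, hδ₀, M, hM, hlem⟩ := visit_density_le f hf Kb hKbclosed hKbmc θ hθpos
    refine ⟨min δ₀ (ε / 8), lt_min hδ₀ (by positivity),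
      lt_of_le_of_lt (min_le_right _ _) (by linarith), ?_⟩
    intro x hx
    obtain ⟨N, hNpos, hxN⟩ := hx
    have hwin : ∀ n, N ≤ n → ∀ k,
        (∑ i ∈ Finset.range n, dist (f (x (i + k))) (x (i + k + 1))) < min δ₀ (ε / 8) * n := by
      intro n hn k
      have hnR : (0 : ℝ) < n := by
        have : 0 < n := lt_of_lt_of_le hNpos hn
        exact_mod_cast this
      have := hxN n hn k
      rwa [div_lt_iff₀ hnR] at this
    have hcnt : ∀ n, max M N ≤ n → ∀ k,
        (({i | i < n ∧ x (i + k) ∈ Kb}).ncard : ℝ) ≤ θ * n := by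
      intro n hn k
      have hnR : (0 : ℝ) ≤ n := Nat.cast_nonneg n
      refine hlem (fun i => x (i + k)) n (le_trans (le_max_left _ _) hn) ?_
      have h := hwin n (le_trans (le_max_right _ _) hn) k
      have heq : (∑ i ∈ Finset.range n, dist (f (x (i + k))) (x (i + 1 + k)))
          = ∑ i ∈ Finset.range n, dist (f (x (i + k))) (x (i + k + 1)) := by
        refine Finset.sum_congr rfl fun i _ => ?_
        have : i + 1 + k = i + k + 1 := by omega
        rw [this]
      calc (∑ i ∈ Finset.range n, dist (f (x (i + k))) (x (i + 1 + k)))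
          = ∑ i ∈ Finset.range n, dist (f (x (i + k))) (x (i + k + 1)) := heq
        _ < min δ₀ (ε / 8) * n := h
        _ ≤ δ₀ * n := mul_le_mul_of_nonneg_right (min_le_left _ _) hnR
    -- choose approximating points in A
    have hsel : ∀ i, ∃ a, a ∈ A ∧ (x i ∉ Kb → dist (x i) a < ε') := by
      intro i
      by_cases hi : x i ∈ Kb
      · exact ⟨a0, ha0, fun h => absurd hi h⟩
      · have hlt : Metric.infDist (x i) A < ε' := by
          rw [hKbdef] at hi
          simpa using not_le.mp hi
        obtain ⟨a, haA, hda⟩ := (Metric.infDist_lt_iff ⟨a0, ha0⟩).mp hlt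
        exact ⟨a, haA, fun _ => hda⟩
    choose aa haaA haad using hsel
    set y : ℕ → X := fun i => Nat.rec (aa 0)
      (fun j yj => if x (j + 1) ∉ Kb then aa (j + 1) else f yj) i with hydef
    have hysucc : ∀ j, y (j + 1) = if x (j + 1) ∉ Kb then aa (j + 1) else f (y j) :=
      fun j => rfl
    have hyA : ∀ i, y i ∈ A := by
      intro i
      induction i with
      | zero => exact haaA 0
      | succ j ih =>
        rw [hysucc]
        split
        · exact haaA _
        · exact hfA ih
    have hygood : ∀ i, x i ∉ Kb → y i = aa i := by
      intro i hi
      cases i with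
      | zero => rfl
      | succ j => rw [hysucc]; exact if_pos hi
    have hydist : ∀ i, x i ∉ Kb → dist (x i) (y i) < ε' := fun i hi => by
      rw [hygood i hi]; exact haad i hi
    -- termwise estimate
    have htm : ∀ j, dist (f (y j)) (y (j + 1))
        ≤ dist (f (x j)) (x (j + 1)) + (ε / 8 + ε')
          + D * (if x j ∈ Kb then (1 : ℝ) else 0) := by
      intro j
      have hind0 : (0 : ℝ) ≤ if x j ∈ Kb then (1 : ℝ) else 0 := by
        split <;> norm_num
      have hDind : 0 ≤ D * (if x j ∈ Kb then (1 : ℝ) else 0) := mul_nonneg hD0 hind0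
      by_cases hj1 : x (j + 1) ∈ Kb
      · rw [hysucc j, if_neg (not_not_intro hj1), dist_self]
        have := dist_nonneg (x := f (x j)) (y := x (j + 1))
        linarith
      · rw [hysucc j, if_pos hj1]
        by_cases hj : x j ∈ Kb
        · rw [if_pos hj]
          have h1 := hDb (f (y j)) (aa (j + 1))
          have := dist_nonneg (x := f (x j)) (y := x (j + 1))
          linarith
        · rw [if_neg hj, hygood j hj]
          have hd1 : dist (aa j) (x j) < ε'' := by
            rw [dist_comm]
            exact lt_trans (haad j hj) hε''
          have h1 : dist (f (aa j)) (f (x j)) < ε / 8 := hmod hd1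
          have h2 : dist (x (j + 1)) (aa (j + 1)) < ε' := haad (j + 1) hj1
          have h3 : dist (f (aa j)) (aa (j + 1))
              ≤ dist (f (aa j)) (f (x j)) + dist (f (x j)) (x (j + 1))
                + dist (x (j + 1)) (aa (j + 1)) := dist_triangle4 _ _ _ _
          rw [mul_zero]
          linarith
    have hDθ : D * θ ≤ ε / 8 := by
      have hθ2 : θ ≤ ε / (8 * (D + 1)) := min_le_right _ _
      have h1 : D * θ ≤ D * (ε / (8 * (D + 1))) := mul_le_mul_of_nonneg_left hθ2 hD0
      have h2 : D * (ε / (8 * (D + 1))) ≤ ε / 8 := by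
        rw [show D * (ε / (8 * (D + 1))) = D * ε / (8 * (D + 1)) from (mul_div_assoc _ _ _).symm,
          div_le_div_iff₀ (by positivity) (by norm_num : (0 : ℝ) < 8)]
        nlinarith
      linarith
    have hyAPO : AvgPseudoOrbit f ε y := by
      refine ⟨max M N, lt_of_lt_of_le hM (le_max_left _ _), ?_⟩
      intro n hn k
      have hnpos : 0 < n := lt_of_lt_of_le (lt_of_lt_of_le hM (le_max_left _ _)) hn
      have hnR : (0 : ℝ) < n := by exact_mod_cast hnpos
      have hnN : N ≤ n := le_trans (le_max_right _ _) hn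
      have hind : (∑ i ∈ Finset.range n, (if x (i + k) ∈ Kb then (1 : ℝ) else 0))
          = (({i | i < n ∧ x (i + k) ∈ Kb}).ncard : ℝ) := by
        rw [hcount_eq, Finset.sum_boole]
      have hS : (∑ i ∈ Finset.range n, dist (f (y (i + k))) (y (i + k + 1)))
          ≤ (∑ i ∈ Finset.range n, dist (f (x (i + k))) (x (i + k + 1)))
            + (ε / 8 + ε') * n + D * (θ * n) := by
        have h1 : (∑ i ∈ Finset.range n, dist (f (y (i + k))) (y (i + k + 1)))
            ≤ ∑ i ∈ Finset.range n, (dist (f (x (i + k))) (x (i + k + 1)) + (ε / 8 + ε')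
              + D * (if x (i + k) ∈ Kb then (1 : ℝ) else 0)) :=
          Finset.sum_le_sum fun i _ => htm (i + k)
        have h2 : (∑ i ∈ Finset.range n, (dist (f (x (i + k))) (x (i + k + 1)) + (ε / 8 + ε')
              + D * (if x (i + k) ∈ Kb then (1 : ℝ) else 0)))
            = (∑ i ∈ Finset.range n, dist (f (x (i + k))) (x (i + k + 1)))
              + (ε / 8 + ε') * n
              + D * (∑ i ∈ Finset.range n, (if x (i + k) ∈ Kb then (1 : ℝ) else 0)) := by
          rw [Finset.sum_add_distrib, Finset.sum_add_distrib, Finset.sum_const,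
            Finset.card_range, nsmul_eq_mul, ← Finset.mul_sum]
          ring
        have h3 : D * (∑ i ∈ Finset.range n, (if x (i + k) ∈ Kb then (1 : ℝ) else 0))
            ≤ D * (θ * n) := by
          rw [hind]
          exact mul_le_mul_of_nonneg_left (hcnt n hn k) hD0
        linarith
      have hd := hwin n hnN k
      have hd' : (∑ i ∈ Finset.range n, dist (f (x (i + k))) (x (i + k + 1))) ≤ ε / 8 * n :=
        le_trans hd.le (mul_le_mul_of_nonneg_right (min_le_right _ _) hnR.le)
      rw [div_lt_iff₀ hnR]
      have hDθn : D * (θ * n) ≤ ε / 8 * n := by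
        rw [← mul_assoc]
        exact mul_le_mul_of_nonneg_right hDθ hnR.le
      have hfinal : (∑ i ∈ Finset.range n, dist (f (y (i + k))) (y (i + k + 1)))
          ≤ (ε / 2) * n := by
        have : (ε / 8 + ε') * n ≤ (ε / 4) * n := by
          refine mul_le_mul_of_nonneg_right ?_ hnR.le
          linarith
        linarith
      have : (ε / 2) * n < ε * n := by
        have : ε / 2 < ε := by linarith
        exact mul_lt_mul_of_pos_right this hnR
      linarith
    refine ⟨y, hyA, hyAPO, ?_⟩
    have hev : ∀ᶠ n in atTop,
        (({i : ℕ | i < n ∧ ε ≤ dist (x i) (y i)}).ncard : ℝ) / n ≤ θ := by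
      filter_upwards [eventually_ge_atTop (max M N), eventually_ge_atTop 1] with n hn hn1
      have hnR : (0 : ℝ) < n := by
        have : 0 < n := hn1
        exact_mod_cast this
      have hsub : {i : ℕ | i < n ∧ ε ≤ dist (x i) (y i)} ⊆ {i : ℕ | i < n ∧ x i ∈ Kb} := by
        rintro i ⟨hin, hid⟩
        refine ⟨hin, ?_⟩
        by_contra hKi
        have h1 := hydist i hKi
        have : ε' < ε := lt_of_le_of_lt hε'8 (by linarith)
        linarith
      have hfin : {i : ℕ | i < n ∧ x i ∈ Kb}.Finite :=
        (Set.finite_Iio n).subset fun i hi => hi.1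
      have hle := Set.ncard_le_ncard hsub hfin
      have hcnt0 : (({i : ℕ | i < n ∧ x (i + 0) ∈ Kb}).ncard : ℝ) ≤ θ * n := hcnt n hn 0
      simp only [add_zero] at hcnt0
      rw [div_le_iff₀ hnR]
      calc (({i : ℕ | i < n ∧ ε ≤ dist (x i) (y i)}).ncard : ℝ)
          ≤ (({i : ℕ | i < n ∧ x i ∈ Kb}).ncard : ℝ) := by exact_mod_cast hle
        _ ≤ θ * n := hcnt0
    have hcob : IsCoboundedUnder (· ≤ ·) atTop
        (fun n : ℕ => (({i : ℕ | i < n ∧ ε ≤ dist (x i) (y i)}).ncard : ℝ) / n) :=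
      isCoboundedUnder_le_of_le atTop (x := 0) fun n => by positivity
    have hlim : limsup (fun n : ℕ =>
        (({i : ℕ | i < n ∧ ε ≤ dist (x i) (y i)}).ncard : ℝ) / n) atTop ≤ θ :=
      limsup_le_of_le hcob hev
    exact lt_of_le_of_lt hlim (lt_of_le_of_lt (min_le_left _ _) (by linarith))
end

section
/- Every uniquely ergodic and proximal dynamical system on a compact metric space has the almost specification property. That is, if X is a compact metric space and f : X → X is a continuous map which admits exactly one f-invariant Borel probability measure and for which every pair (x,y) ∈ X × X satisfies liminf_{n→∞} d(f^n(x), f^n(y)) = 0, then f has the almost specification property. -/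
open Filter Metric Set MeasureTheory Topology

section AuxSpec

open scoped NNReal ENNReal

variable {X : Type*} [MetricSpace X]

open scoped Classical in
/-- Number of times `s < n` at which the orbit of `x` is `ε`-far from `p`. -/
noncomputable def cntAux (f : X → X) (p : X) (ε : ℝ) (n : ℕ) (x : X) : ℕ :=
  ((Finset.range n).filter (fun s => f^[s] x ∈ {y : X | ε ≤ dist y p})).card

/-- Empirical visit frequencies along orbit segments. -/
noncomputable def empAvg (f : X → X) (x : ℕ → X) (n : ℕ → ℕ) (S : Set X) (k : ℕ) : ℝ :=
  (∑ s ∈ Finset.range (n k), Set.indicator S (fun _ => (1:ℝ)) (f^[s] (x k))) / (n k)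

lemma indicator_one_le_one (S : Set X) (y : X) :
    Set.indicator S (fun _ => (1:ℝ)) y ≤ 1 := by
  classical
  rw [Set.indicator_apply]
  split_ifs <;> norm_num

lemma sum_indicator_shift (f : X → X) (x : X) (n : ℕ) (S : Set X) :
    (∑ s ∈ Finset.range n, Set.indicator S (fun _ => (1:ℝ)) (f^[s] x)) ≤
      (∑ s ∈ Finset.range n, Set.indicator (f '' S) (fun _ => (1:ℝ)) (f^[s] x)) + 1 := by
  set h : ℕ → ℝ := fun t => Set.indicator (f '' S) (fun _ => (1:ℝ)) (f^[t] x) with hh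
  have h0 : ∀ t, 0 ≤ h t := fun t => Set.indicator_nonneg (fun _ _ => zero_le_one) _
  have h1 : ∀ t, h t ≤ 1 := fun t => indicator_one_le_one _ _
  have step1 : (∑ s ∈ Finset.range n, Set.indicator S (fun _ => (1:ℝ)) (f^[s] x)) ≤
      ∑ s ∈ Finset.range n, h (s + 1) := by
    apply Finset.sum_le_sum
    intro s _
    by_cases hs : f^[s] x ∈ S
    · rw [Set.indicator_of_mem hs]
      have hmem : f^[s+1] x ∈ f '' S := by
        rw [Function.iterate_succ_apply']
        exact Set.mem_image_of_mem f hs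
      simp only [hh]
      rw [Set.indicator_of_mem hmem]
    · rw [Set.indicator_of_notMem hs]
      exact h0 (s + 1)
  have e1 : (∑ t ∈ Finset.range (n+1), h t) = (∑ s ∈ Finset.range n, h (s+1)) + h 0 :=
    Finset.sum_range_succ' h n
  have e2 : (∑ t ∈ Finset.range (n+1), h t) = (∑ t ∈ Finset.range n, h t) + h n :=
    Finset.sum_range_succ h n
  have := h0 0
  have := h1 n
  linarith

open scoped Classical in
lemma cnt_eq_sum (f : X → X) (p : X) (ε : ℝ) (n : ℕ) (x : X) :
    (cntAux f p ε n x : ℝ) =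
      ∑ s ∈ Finset.range n, Set.indicator {y : X | ε ≤ dist y p} (fun _ => (1:ℝ)) (f^[s] x) := by
  unfold cntAux
  rw [Finset.card_filter]
  push_cast
  apply Finset.sum_congr rfl
  intro s _
  by_cases h : f^[s] x ∈ {y : X | ε ≤ dist y p}
  · rw [Set.indicator_of_mem h, if_pos h]
  · rw [Set.indicator_of_notMem h, if_neg h]

lemma cntAux_le (f : X → X) (p : X) (ε : ℝ) (n : ℕ) (x : X) : cntAux f p ε n x ≤ n := by
  classical
  calc cntAux f p ε n x ≤ (Finset.range n).card := Finset.card_filter_le _ _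
  _ = n := Finset.card_range n

lemma cntAux_mono (f : X → X) (p : X) (ε : ℝ) (n : ℕ) (x : X) :
    cntAux f p ε n x ≤ cntAux f p ε (n + 1) x := by
  classical
  exact Finset.card_le_card (Finset.filter_subset_filter _
    (Finset.range_subset_range.2 (Nat.le_succ n)))

open scoped Classical in
lemma card_shift (f : X → X) (x : X) (n : ℕ) (S : Set X) :
    ((Finset.range n).filter (fun s => f^[s] x ∈ S)).card ≤
      ((Finset.range n).filter (fun s => f^[s] x ∈ f '' S)).card + 1 := by
  classical
  have h1 : ((Finset.range n).filter (fun s => f^[s] x ∈ S)).card ≤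
      ((Finset.range n).filter (fun s => f^[s+1] x ∈ f '' S)).card := by
    apply Finset.card_le_card
    intro s hs
    rw [Finset.mem_filter] at hs ⊢
    refine ⟨hs.1, ?_⟩
    rw [Function.iterate_succ_apply']
    exact Set.mem_image_of_mem f hs.2
  have h2 : ((Finset.range n).filter (fun s => f^[s+1] x ∈ f '' S)).card ≤
      ((Finset.range (n+1)).filter (fun t => f^[t] x ∈ f '' S)).card := by
    have hinj : Function.Injective (fun s : ℕ => s + 1) := add_left_injective 1
    rw [← Finset.card_image_of_injective _ hinj]
    apply Finset.card_le_card
    intro t ht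
    rw [Finset.mem_image] at ht
    obtain ⟨s, hs, rfl⟩ := ht
    rw [Finset.mem_filter] at hs ⊢
    exact ⟨Finset.mem_range.2 (Nat.succ_lt_succ (Finset.mem_range.1 hs.1)), hs.2⟩
  have h3 : ((Finset.range (n+1)).filter (fun t => f^[t] x ∈ f '' S)).card ≤
      ((Finset.range n).filter (fun t => f^[t] x ∈ f '' S)).card + 1 := by
    rw [Finset.range_add_one, Finset.filter_insert]
    split_ifs
    · exact Finset.card_insert_le _ _
    · exact Nat.le_succ_of_le le_rfl
  omega

/-- A compact proximal system has a fixed point. -/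
lemma exists_fixed_point [CompactSpace X] [Nonempty X] (f : X → X) (hf : Continuous f)
    (hprox : ∀ x y : X,
      liminf (fun n : ℕ => dist (f^[n] x) (f^[n] y)) atTop = 0) :
    ∃ p : X, f p = p := by
  obtain ⟨x⟩ := ‹Nonempty X›
  have hfreq : ∀ m : ℕ, ∃ᶠ l in atTop,
      dist (f^[l] x) (f^[l] (f x)) < 1 / (m + 1) := by
    intro m
    apply frequently_lt_of_liminf_lt
    · exact Filter.isCoboundedUnder_ge_of_le _ (x := Metric.diam (Set.univ : Set X))
        fun n => Metric.dist_le_diam_of_mem isCompact_univ.isBounded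
          (Set.mem_univ _) (Set.mem_univ _)
    · rw [hprox x (f x)]
      positivity
  obtain ⟨φ, hφ, hφd⟩ := Filter.extraction_forall_of_frequently hfreq
  obtain ⟨p, -, ψ, hψ, hψt⟩ := IsCompact.tendsto_subseq (x := fun m => f^[φ m] x)
    isCompact_univ (fun n => Set.mem_univ _)
  refine ⟨p, ?_⟩
  have hd : ∀ m : ℕ, dist (f p) p ≤ dist (f p) (f (f^[φ (ψ m)] x))
      + dist (f (f^[φ (ψ m)] x)) (f^[φ (ψ m)] x) + dist (f^[φ (ψ m)] x) p := fun m =>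
    dist_triangle4 _ _ _ _
  have ht1 : Tendsto (fun m => dist (f p) (f (f^[φ (ψ m)] x))) atTop (nhds 0) := by
    have : Tendsto (fun m => f (f^[φ (ψ m)] x)) atTop (nhds (f p)) :=
      (hf.tendsto p).comp hψt
    simpa using (tendsto_const_nhds (x := f p)).dist this
  have ht2 : Tendsto (fun m => dist (f (f^[φ (ψ m)] x)) (f^[φ (ψ m)] x)) atTop (nhds 0) := by
    apply squeeze_zero (fun m => dist_nonneg) (g := fun m : ℕ => 1 / ((ψ m : ℝ) + 1))
    · intro m
      have := hφd (ψ m)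
      rw [← Function.iterate_succ_apply, Function.iterate_succ_apply'] at this
      exact le_of_lt (by rwa [dist_comm] at this)
    · apply Tendsto.comp tendsto_one_div_add_atTop_nhds_zero_nat
        (hψ.tendsto_atTop)
  have ht3 : Tendsto (fun m => dist (f^[φ (ψ m)] x) p) atTop (nhds 0) := by
    simpa using hψt.dist (tendsto_const_nhds (x := p))
  have : Tendsto (fun m => dist (f p) (f (f^[φ (ψ m)] x))
      + dist (f (f^[φ (ψ m)] x)) (f^[φ (ψ m)] x) + dist (f^[φ (ψ m)] x) p)
      atTop (nhds 0) := by
    simpa using (ht1.add ht2).add ht3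
  have h0 : dist (f p) p ≤ 0 := ge_of_tendsto this (Filter.Eventually.of_forall hd)
  have := dist_nonneg (x := f p) (y := p)
  rw [← dist_eq_zero]
  linarith

/-- Key uniform lemma: under unique ergodicity with a fixed point `p`, orbits
spend an asymptotically negligible, uniformly controlled, fraction of time
`ε`-away from `p`. -/
lemma keyUnif [CompactSpace X] {m0 : MeasurableSpace X} [BorelSpace X]
    (f : X → X) (hf : Continuous f) (p : X) (hp : f p = p)
    (huniq : ∃! μ : Measure X, InvariantProb f μ)
    {ε δ : ℝ} (hε : 0 < ε) (hδ : 0 < δ) :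
    ∀ᶠ n in atTop, ∀ x : X, (cntAux f p ε n x : ℝ) ≤ δ * n := by
  classical
  by_contra hcon
  rw [Filter.not_eventually] at hcon
  have hcon' : ∃ᶠ n in atTop, ∃ x : X, δ * n < (cntAux f p ε n x : ℝ) := by
    apply hcon.mono
    intro n hn
    push_neg at hn
    exact hn
  obtain ⟨φ, hφ, hφx⟩ := Filter.extraction_of_frequently_atTop hcon'
  choose xs hxs using hφx
  have hn0 : ∀ k, 0 < φ k := by
    intro k
    rcases Nat.eq_zero_or_pos (φ k) with h | h
    · exfalso
      have := hxs k
      rw [h] at this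
      simp [cntAux] at this
    · exact h
  classical
  have hTN : ∀ {a b : ℝ}, a ≤ b → Real.toNNReal a ≤ Real.toNNReal b :=
    fun h => Real.toNNReal_le_toNNReal_iff'.2 (Or.inl h)
  set U : Ultrafilter ℕ := Ultrafilter.of atTop with hUdef
  have hUle : (U : Filter ℕ) ≤ atTop := Ultrafilter.of_le _
  have hn0' : ∀ k, (0:ℝ) < (φ k : ℝ) := fun k => by exact_mod_cast hn0 k
  have hlim : ∀ S : Set X, ∃ r : ℝ, r ∈ Set.Icc (0:ℝ) 1 ∧
      Tendsto (empAvg f xs φ S) (U : Filter ℕ) (nhds r) := by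
    intro S
    have hmem : ∀ k, empAvg f xs φ S k ∈ Set.Icc (0:ℝ) 1 := by
      intro k
      unfold empAvg
      constructor
      · apply div_nonneg ?_ (le_of_lt (hn0' k))
        exact Finset.sum_nonneg fun s _ => Set.indicator_nonneg (fun _ _ => zero_le_one) _
      · rw [div_le_one (hn0' k)]
        calc (∑ s ∈ Finset.range (φ k), Set.indicator S (fun _ => (1:ℝ)) (f^[s] (xs k)))
            ≤ ∑ _s ∈ Finset.range (φ k), (1:ℝ) :=
              Finset.sum_le_sum fun s _ => indicator_one_le_one _ _
          _ = (φ k : ℝ) := by simp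
    obtain ⟨r, hr, hle⟩ := (isCompact_Icc (a := (0:ℝ)) (b := 1)).ultrafilter_le_nhds
      (U.map (empAvg f xs φ S)) (by
        rw [Ultrafilter.coe_map, Filter.le_principal_iff, Filter.mem_map]
        exact Filter.univ_mem' hmem)
    rw [Ultrafilter.coe_map] at hle
    exact ⟨r, hr, hle⟩
  choose cm hcm01 hcmT using hlim
  have hUniqLim : ∀ (S : Set X) (r : ℝ),
      Tendsto (empAvg f xs φ S) (U : Filter ℕ) (nhds r) → cm S = r :=
    fun S r h => tendsto_nhds_unique (hcmT S) h
  have hemp_mono : ∀ (S T : Set X), S ⊆ T → ∀ k,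
      empAvg f xs φ S k ≤ empAvg f xs φ T k := by
    intro S T h k
    unfold empAvg
    rw [div_le_div_iff_of_pos_right (hn0' k)]
    exact Finset.sum_le_sum fun s _ =>
      Set.indicator_le_indicator_of_subset h (fun _ => zero_le_one) _
  have hcm_mono : ∀ S T : Set X, S ⊆ T → cm S ≤ cm T := fun S T h =>
    le_of_tendsto_of_tendsto' (hcmT S) (hcmT T) (hemp_mono S T h)
  have hemp_union : ∀ (S T : Set X), Disjoint S T → ∀ k,
      empAvg f xs φ (S ∪ T) k = empAvg f xs φ S k + empAvg f xs φ T k := by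
    intro S T hST k
    unfold empAvg
    rw [← add_div]
    congr 1
    rw [← Finset.sum_add_distrib]
    apply Finset.sum_congr rfl
    intro s _
    rw [Set.indicator_union_of_disjoint hST]
  have hcm_union : ∀ S T : Set X, Disjoint S T → cm (S ∪ T) = cm S + cm T := by
    intro S T h
    refine hUniqLim _ _ ?_
    exact Tendsto.congr (fun k => (hemp_union S T h k).symm) ((hcmT S).add (hcmT T))
  have hcm_univ : cm Set.univ = 1 := by
    refine hUniqLim _ _ ?_
    have hone : ∀ k, empAvg f xs φ Set.univ k = 1 := by
      intro k
      unfold empAvg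
      simp only [Set.indicator_univ]
      rw [Finset.sum_const, Finset.card_range, nsmul_eq_mul, mul_one]
      exact div_self (ne_of_gt (hn0' k))
    exact Tendsto.congr (fun k => (hone k).symm) tendsto_const_nhds
  have hcm_shift : ∀ S : Set X, cm S ≤ cm (f '' S) := by
    intro S
    have hpt : ∀ k, empAvg f xs φ S k ≤ empAvg f xs φ (f '' S) k + 1 / (φ k) := by
      intro k
      unfold empAvg
      rw [← add_div, div_le_div_iff_of_pos_right (hn0' k)]
      exact sum_indicator_shift f (xs k) (φ k) S
    have h2 : Tendsto (fun k => empAvg f xs φ (f '' S) k + 1 / (φ k))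
        (U : Filter ℕ) (nhds (cm (f '' S) + 0)) := by
      refine (hcmT _).add (Tendsto.mono_left ?_ hUle)
      exact tendsto_one_div_atTop_nhds_zero_nat.comp hφ.tendsto_atTop
    rw [add_zero] at h2
    exact le_of_tendsto_of_tendsto' (hcmT S) h2 hpt
  set K0 : Set X := {y : X | ε ≤ dist y p} with hK0def
  have hcmK0 : δ ≤ cm K0 := by
    refine ge_of_tendsto (hcmT K0) (Filter.Eventually.of_forall fun k => ?_)
    have hlt := hxs k
    unfold empAvg
    rw [le_div_iff₀ (hn0' k)]
    have hceq := cnt_eq_sum f p ε (φ k) (xs k)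
    rw [← hK0def] at hceq
    rw [← hceq]
    exact le_of_lt hlt
  have hcm_nonneg : ∀ S : Set X, 0 ≤ cm S := fun S => (hcm01 S).1
  have hcm_le_one : ∀ S : Set X, cm S ≤ 1 := fun S => (hcm01 S).2
  set cont : MeasureTheory.Content X :=
    { toFun := fun K => Real.toNNReal (cm K.1)
      mono' := fun K1 K2 h => hTN (hcm_mono _ _ h)
      sup_disjoint' := by
        intro K1 K2 hdis _ _
        show Real.toNNReal (cm ((K1 : Set X) ∪ (K2 : Set X))) = _
        rw [hcm_union _ _ hdis, Real.toNNReal_add (hcm_nonneg _) (hcm_nonneg _)]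
        rfl
      sup_le' := by
        intro K1 K2
        have h1 : cm (K1.1 ∪ K2.1) ≤ cm K1.1 + cm K2.1 := by
          have e : K1.1 ∪ K2.1 = K1.1 ∪ (K2.1 \ K1.1) := by
            rw [Set.union_diff_self]
          rw [e, hcm_union _ _ disjoint_sdiff_self_right]
          exact add_le_add le_rfl (hcm_mono _ _ Set.diff_subset)
        calc Real.toNNReal (cm ((K1 ⊔ K2 : TopologicalSpace.Compacts X) : Set X))
            ≤ Real.toNNReal (cm K1.1 + cm K2.1) := hTN h1
          _ ≤ Real.toNNReal (cm K1.1) + Real.toNNReal (cm K2.1) := Real.toNNReal_add_le }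
    with hcontdef
  set μm := cont.measure with hμm
  have hcontK : ∀ K : TopologicalSpace.Compacts X,
      (cont K : ℝ≥0∞) = (Real.toNNReal (cm K.1) : ℝ≥0∞) := fun K => rfl
  have hμuniv : μm Set.univ = 1 := by
    rw [hμm, MeasureTheory.Content.measure_apply _ MeasurableSet.univ,
      cont.outerMeasure_of_isOpen _ isOpen_univ]
    apply le_antisymm
    · unfold MeasureTheory.Content.innerContent
      refine iSup₂_le fun K _ => ?_
      rw [hcontK]
      rw [show (1:ℝ≥0∞) = ((1:ℝ≥0) : ℝ≥0∞) from rfl, ENNReal.coe_le_coe,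
        ← Real.toNNReal_one]
      exact hTN (hcm_le_one _)
    · refine le_trans ?_ (cont.le_innerContent
        ⟨Set.univ, isCompact_univ⟩ _ (subset_refl _))
      rw [hcontK]
      simp [hcm_univ]
  have hprobm : MeasureTheory.IsProbabilityMeasure μm := ⟨hμuniv⟩
  have houter_open : ∀ (V : Set X), IsOpen V →
      cont.outerMeasure (f ⁻¹' V) ≤ cont.outerMeasure V := by
    intro V hV
    rw [cont.outerMeasure_of_isOpen _ (hV.preimage hf)]
    rw [cont.outerMeasure_of_isOpen _ hV]
    conv_lhs => unfold MeasureTheory.Content.innerContent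
    refine iSup₂_le fun K hK => ?_
    have h1 : (cont K : ℝ≥0∞) ≤ (cont (K.map f hf) : ℝ≥0∞) := by
      rw [hcontK, hcontK, ENNReal.coe_le_coe]
      exact hTN (hcm_shift K.1)
    exact h1.trans (cont.le_innerContent (K.map f hf) _
      (Set.image_subset_iff.2 hK))
  have houter : ∀ A : Set X, cont.outerMeasure (f ⁻¹' A) ≤ cont.outerMeasure A := by
    intro A
    rw [MeasureTheory.Content.outerMeasure_eq_iInf cont A]
    refine le_iInf fun V => le_iInf fun hV => le_iInf fun hAV => ?_
    calc cont.outerMeasure (f ⁻¹' A) ≤ cont.outerMeasure (f ⁻¹' V) :=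
          measure_mono (Set.preimage_mono hAV)
      _ ≤ cont.outerMeasure V := houter_open V hV
      _ = cont.innerContent ⟨V, hV⟩ := cont.outerMeasure_of_isOpen _ hV
  have hinv : ∀ B : Set X, MeasurableSet B → μm (f ⁻¹' B) = μm B := by
    intro B hB
    have hfB : MeasurableSet (f ⁻¹' B) := hf.measurable hB
    have h1 : μm (f ⁻¹' B) ≤ μm B := by
      rw [hμm, MeasureTheory.Content.measure_apply _ hfB,
        MeasureTheory.Content.measure_apply _ hB]
      exact houter B
    have h2 : μm (f ⁻¹' Bᶜ) ≤ μm Bᶜ := by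
      rw [hμm, MeasureTheory.Content.measure_apply _ (hf.measurable hB.compl),
        MeasureTheory.Content.measure_apply _ hB.compl]
      exact houter Bᶜ
    have hsum1 : μm (f ⁻¹' B) + μm (f ⁻¹' Bᶜ) = 1 := by
      rw [Set.preimage_compl, measure_add_measure_compl hfB, hμuniv]
    have hsum2 : μm B + μm Bᶜ = 1 := by
      rw [measure_add_measure_compl hB, hμuniv]
    have h3 : μm B + μm Bᶜ ≤ μm (f ⁻¹' B) + μm Bᶜ := by
      rw [hsum2, ← hsum1]
      exact add_le_add le_rfl h2
    have h4 : μm B ≤ μm (f ⁻¹' B) :=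
      ENNReal.le_of_add_le_add_right (measure_ne_top μm Bᶜ) h3
    exact le_antisymm h1 h4
  have hInvm : InvariantProb f μm := ⟨hprobm, hinv⟩
  have hdirac : InvariantProb f (MeasureTheory.Measure.dirac p) := by
    refine ⟨by infer_instance, fun B hB => ?_⟩
    rw [MeasureTheory.Measure.dirac_apply' _ (hf.measurable hB),
      MeasureTheory.Measure.dirac_apply' _ hB]
    by_cases hpB : p ∈ B
    · rw [Set.indicator_of_mem (by rwa [Set.mem_preimage, hp]) ,
        Set.indicator_of_mem hpB]
    · rw [Set.indicator_of_notMem (by rwa [Set.mem_preimage, hp]),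
        Set.indicator_of_notMem hpB]
  obtain ⟨μ0, -, hu⟩ := huniq
  have heq : μm = MeasureTheory.Measure.dirac p := (hu _ hInvm).trans (hu _ hdirac).symm
  have hK0closed : IsClosed K0 :=
    isClosed_le continuous_const (continuous_id.dist continuous_const)
  have hK0meas : MeasurableSet K0 := hK0closed.measurableSet
  have hlow : ((Real.toNNReal δ : ℝ≥0) : ℝ≥0∞) ≤ μm K0 := by
    rw [hμm, MeasureTheory.Content.measure_apply _ hK0meas]
    refine le_trans ?_
      (cont.le_outerMeasure_compacts ⟨K0, hK0closed.isCompact⟩)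
    rw [hcontK, ENNReal.coe_le_coe]
    exact hTN hcmK0
  rw [heq, MeasureTheory.Measure.dirac_apply' _ hK0meas,
    Set.indicator_of_notMem (by simp [hK0def, dist_self, not_le, hε])] at hlow
  rw [nonpos_iff_eq_zero] at hlow
  exact absurd hlow (by simp [ENNReal.coe_eq_zero, Real.toNNReal_eq_zero, not_le, hδ])

open scoped Classical in
lemma cntAux_compl (f : X → X) (p : X) (ε : ℝ) (n : ℕ) (x : X) :
    ∃ Λ : Finset ℕ, Λ ⊆ Finset.range n ∧ Λ.card + cntAux f p ε n x = n ∧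
      ∀ s ∈ Λ, dist (f^[s] x) p < ε := by
  refine ⟨(Finset.range n).filter (fun s => ¬ f^[s] x ∈ {y : X | ε ≤ dist y p}),
    Finset.filter_subset _ _, ?_, ?_⟩
  · unfold cntAux
    rw [add_comm]
    have h := Finset.card_filter_add_card_filter_not
      (p := fun s => f^[s] x ∈ {y : X | ε ≤ dist y p}) (s := Finset.range n)
    rw [Finset.card_range] at h
    exact h
  · intro s hs
    rw [Finset.mem_filter] at hs
    have h2 := hs.2
    simp only [Set.mem_setOf_eq, not_le] at h2
    exact h2

end AuxSpec

/-- Every uniquely ergodic and proximal compact dynamical system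
has the almost specification property. -/
theorem uniquelyErgodic_proximal_almostSpec
    {X : Type*} [MetricSpace X] [CompactSpace X] [MeasurableSpace X] [BorelSpace X]
    (f : X → X) (hf : Continuous f)
    (huniq : ∃! μ : Measure X, InvariantProb f μ)
    (hprox : ∀ x y : X,
      liminf (fun n : ℕ => dist (f^[n] x) (f^[n] y)) atTop = 0) :
    AlmostSpec f := by
  classical
  have hne : Nonempty X := by
    obtain ⟨μ0, h0, -⟩ := huniq
    rcases isEmpty_or_nonempty X with hE | hN
    · exfalso
      have h1 : μ0 Set.univ = 1 := h0.1.measure_univ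
      rw [Set.univ_eq_empty_iff.2 hE] at h1
      simp at h1
    · exact hN
  obtain ⟨p, hp⟩ := exists_fixed_point f hf hprox
  set g : ℕ → ℝ → ℕ :=
    fun n ε => sSup {k : ℕ | ∃ x : X, k = cntAux f p (min ε 1) n x} with hgdef
  have hbdd : ∀ (n : ℕ) (ε : ℝ), BddAbove {k : ℕ | ∃ x : X, k = cntAux f p ε n x} := by
    intro n ε
    refine ⟨n, fun k hk => ?_⟩
    obtain ⟨x, rfl⟩ := hk
    exact cntAux_le f p ε n x
  have hnonempty : ∀ (n : ℕ) (ε : ℝ),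
      Set.Nonempty {k : ℕ | ∃ x : X, k = cntAux f p ε n x} := by
    intro n ε
    obtain ⟨x⟩ := hne
    exact ⟨_, x, rfl⟩
  have hle_g : ∀ (n : ℕ) (ε : ℝ) (x : X), cntAux f p (min ε 1) n x ≤ g n ε := by
    intro n ε x
    exact le_csSup (hbdd n _) ⟨x, rfl⟩
  have hg_le : ∀ (n : ℕ) (ε : ℝ) (m : ℕ),
      (∀ x : X, cntAux f p (min ε 1) n x ≤ m) → g n ε ≤ m := by
    intro n ε m h
    apply csSup_le (hnonempty n _)
    rintro k ⟨x, rfl⟩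
    exact h x
  refine ⟨g, 1, fun _ => 0, ⟨one_pos, ?_, ?_, ?_⟩, ?_⟩
  · -- monotone in n
    intro n ε _ _
    apply hg_le
    intro x
    exact (cntAux_mono f p _ n x).trans (hle_g (n+1) ε x)
  · -- g n ε / n → 0
    intro ε hε hε1
    have hmin : min ε 1 = ε := min_eq_left hε1
    rw [Metric.tendsto_atTop]
    intro η hη
    have hkey := keyUnif f hf p hp huniq (ε := ε) (δ := η/2) hε (by positivity)
    rw [Filter.eventually_atTop] at hkey
    obtain ⟨N, hN⟩ := hkey
    refine ⟨max N 1, fun n hn => ?_⟩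
    have hn1 : 1 ≤ n := le_trans (le_max_right N 1) hn
    have hnN : N ≤ n := le_trans (le_max_left N 1) hn
    have hgle : (g n ε : ℝ) ≤ η/2 * n := by
      have hmem := Nat.sSup_mem (hnonempty n (min ε 1)) (hbdd n (min ε 1))
      obtain ⟨x, hxeq⟩ := hmem
      have hgx : (g n ε : ℝ) = (cntAux f p (min ε 1) n x : ℝ) := by
        simp only [hgdef]
        exact_mod_cast congrArg Nat.cast hxeq
      rw [hgx, hmin]
      exact hN n hnN x
    have hnpos : (0:ℝ) < n := by exact_mod_cast hn1
    rw [Real.dist_eq, sub_zero, abs_of_nonneg (by positivity)]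
    calc (g n ε : ℝ) / n ≤ (η/2 * n) / n := (div_le_div_iff_of_pos_right hnpos).2 hgle
      _ = η/2 := by field_simp
      _ < η := by linarith
  · -- extension beyond the threshold
    intro n ε hε1
    simp only [hgdef]
    rw [min_eq_right (le_of_lt hε1), min_self]
  · -- almost specification with z = p
    intro m hm ε x nseq hεpos hkg
    refine ⟨p, fun j hj1 hjm => ?_⟩
    rw [Function.iterate_fixed hp]
    obtain ⟨Λ, hsub, hcard, hdist⟩ :=
      cntAux_compl f p (min (ε j) 1) (nseq j) (x j)
    refine Set.mem_iUnion₂.2 ⟨Λ, ⟨hsub, ?_⟩, ?_⟩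
    · have h1 : cntAux f p (min (ε j) 1) (nseq j) (x j) ≤ g (nseq j) (ε j) :=
        hle_g (nseq j) (ε j) (x j)
      omega
    · show ∀ s ∈ Λ, dist (f^[s] (x j)) (f^[s] p) < ε j
      intro s hs
      rw [Function.iterate_fixed hp]
      exact lt_of_lt_of_le (hdist s hs) (min_le_left _ _)
end
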